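/- arXiv:2010.00930 — 2 statements merged into one kernel-verified Lean document; each statement's English description precedes it below -/
import Mathlib

section
/- Let T ∈ T^(m)(n) and let X = (v_1, …, v_k) be an S-connected cadet sequence of T with maximal S-cadet sequences X_1, …, X_{k'} listed in increasing order of the index of their last node, and set X_0 = {0} = X_{k'+1}. Define a (possibly failing) sequence of indices as follows: i_0 = 0; for j ≥ 0 with i_j ≠ k', let X_{i_{j+1}} be the smallest-indexed maximal S-cadet sequence that is reached by X_{i_j} but is not reached by X_{i_ℓ} for any ℓ < j, the procedure failing at this step if no such maximal S-cadet sequence exists; if i_j = k', set t = j and terminate. Then: if the procedure fails at any step, the contribution of X is r_S(X) = 0; otherwise the contribution of X is r_S(X) = (−1)^{k−t}. -/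
open scoped Classical

/-- The derived sets `S⁻ᵢⱼ` of nonnegative integers:
for `i < j`, `S⁻ᵢⱼ = {s ≥ 0 : -s ∈ Sᵢⱼ}`, and `S⁻ⱼᵢ = {0} ∪ {s > 0 : s ∈ Sᵢⱼ}`. -/
def Sminus {n : ℕ} (S : Fin n → Fin n → Finset ℤ) (i j : Fin n) : Set ℕ :=
  if i < j then {s : ℕ | -(s : ℤ) ∈ S i j}
  else {0} ∪ {s : ℕ | 0 < s ∧ (s : ℤ) ∈ S j i}

/-- `m`: the maximal absolute value of an element of some `S i j` (`i < j`). -/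
def mOf {n : ℕ} (S : Fin n → Fin n → Finset ℤ) : ℕ :=
  Finset.univ.sup fun p : Fin n × Fin n =>
    if p.1 < p.2 then (S p.1 p.2).sup (fun s => s.natAbs) else 0

/-- A rooted labeled plane tree with `n` nodes (labeled by `Fin n`, index `i` representing
the label `i+1`, so the node `1` is `(0 : Fin n)`), each node having exactly `m+1`
linearly ordered children; children that are not nodes are unlabeled leaves and carry no
further data. `parent v` is the parent node of the node `v` (with the convention
`parent root = root`), and `pos v` is the position of `v` among the `m+1` children of its
parent, so `(pos v : ℕ)` is the number `lsib v` of left siblings of `v`. -/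
structure PlaneTree (n m : ℕ) where
  root : Fin n
  parent : Fin n → Fin n
  pos : Fin n → Fin (m + 1)
  parent_root : parent root = root
  reaches_root : ∀ v : Fin n, ∃ k : ℕ, parent^[k] v = root
  pos_inj : ∀ v w : Fin n, v ≠ root → w ≠ root → parent v = parent w → pos v = pos w → v = w

namespace PlaneTree

variable {n m : ℕ}

/-- `v` is a child of `u` (among the nodes). -/
def IsChild (T : PlaneTree n m) (v u : Fin n) : Prop :=
  v ≠ T.root ∧ T.parent v = u

/-- `v` is the cadet of `u`: the rightmost child of `u` that is a node. -/
def IsCadet (T : PlaneTree n m) (u v : Fin n) : Prop :=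
  T.IsChild v u ∧ ∀ w : Fin n, T.IsChild w u → T.pos w ≤ T.pos v

/-- The number of left siblings of `v`. -/
def lsib (T : PlaneTree n m) (v : Fin n) : ℕ := (T.pos v : ℕ)

end PlaneTree

/-- `(v a, v (a+1), …, v b)` is a cadet sequence of `T` (1-indexed, `1 ≤ a ≤ b`). -/
def IsCadetWindow {n m : ℕ} (T : PlaneTree n m) (v : ℕ → Fin n) (a b : ℕ) : Prop :=
  1 ≤ a ∧ a ≤ b ∧ ∀ p : ℕ, a < p → p ≤ b → T.IsCadet (v (p - 1)) (v p)

/-- `v` is injective on the indices `a, …, b`. -/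
def WindowInj {n : ℕ} (v : ℕ → Fin n) (a b : ℕ) : Prop :=
  ∀ p q : ℕ, a ≤ p → p ≤ b → a ≤ q → q ≤ b → v p = v q → p = q

/-- `(v a, …, v b)` is an `S`-cadet sequence of `T`. -/
def IsSCadetWindow {n m : ℕ} (S : Fin n → Fin n → Finset ℤ) (T : PlaneTree n m)
    (v : ℕ → Fin n) (a b : ℕ) : Prop :=
  IsCadetWindow T v a b ∧
    ∀ i j : ℕ, a ≤ i → i < j → j ≤ b →
      (∑ p ∈ Finset.Icc (i + 1) j, T.lsib (v p)) ∉ Sminus S (v i) (v j)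

/-- `(v 1, …, v k)` is a maximal cadet sequence of `T`: all children of `v k` are
leaves, and no node has `v 1` as its cadet. -/
def IsMaxCadetSeq {n m : ℕ} (T : PlaneTree n m) (k : ℕ) (v : ℕ → Fin n) : Prop :=
  IsCadetWindow T v 1 k ∧ (∀ w : Fin n, ¬ T.IsChild w (v k)) ∧ ∀ u : Fin n, ¬ T.IsCadet u (v 1)

/-- `(v a, …, v b)` is a maximal `S`-cadet sequence inside the ambient cadet sequence
`(v 1, …, v k)`. -/
def IsMaxSCadetWindow {n m : ℕ} (S : Fin n → Fin n → Finset ℤ) (T : PlaneTree n m)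
    (k : ℕ) (v : ℕ → Fin n) (a b : ℕ) : Prop :=
  b ≤ k ∧ IsSCadetWindow S T v a b ∧
    (a = 1 ∨ ¬ IsSCadetWindow S T v (a - 1) b) ∧
    (b = k ∨ ¬ IsSCadetWindow S T v a (b + 1))

/-- `Y` is (the set of nodes of) a maximal `S`-cadet sequence of `T`. -/
def IsMaxSCadetSet {n m : ℕ} (S : Fin n → Fin n → Finset ℤ) (T : PlaneTree n m)
    (Y : Finset (Fin n)) : Prop :=
  ∃ (k : ℕ) (v : ℕ → Fin n) (a b : ℕ), IsMaxCadetSeq T k v ∧ WindowInj v 1 k ∧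
    IsMaxSCadetWindow S T k v a b ∧ Y = (Finset.Icc a b).image v

/-- `Y` is (the set of nodes of) a nonempty cadet sequence of `T`. -/
def IsCadetSeqSet {n m : ℕ} (T : PlaneTree n m) (Y : Finset (Fin n)) : Prop :=
  ∃ (k : ℕ) (v : ℕ → Fin n), IsCadetWindow T v 1 k ∧ WindowInj v 1 k ∧
    Y = (Finset.Icc 1 k).image v

/-- `X` is (the set of nodes of) an `S`-connected cadet sequence of `T`: it is a cadet
sequence, every maximal `S`-cadet sequence is disjoint from it or contained in it, and no
cadet sequence with this property is properly contained in it. -/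
def SConnected {n m : ℕ} (S : Fin n → Fin n → Finset ℤ) (T : PlaneTree n m)
    (X : Finset (Fin n)) : Prop :=
  IsCadetSeqSet T X ∧
    (∀ Y, IsMaxSCadetSet S T Y → X ∩ Y = ∅ ∨ Y ⊆ X) ∧
    ∀ X', IsCadetSeqSet T X' → (∀ Y, IsMaxSCadetSet S T Y → X' ∩ Y = ∅ ∨ Y ⊆ X') →
      X' ⊆ X → X' = X

/-- `Y` is (the set of nodes of) an `S`-cadet sequence of `T` (a possible box). -/
def IsSBox {n m : ℕ} (S : Fin n → Fin n → Finset ℤ) (T : PlaneTree n m)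
    (Y : Finset (Fin n)) : Prop :=
  ∃ (k : ℕ) (v : ℕ → Fin n), IsSCadetWindow S T v 1 k ∧ WindowInj v 1 k ∧
    Y = (Finset.Icc 1 k).image v

/-- `B` is an `S`-boxing of the set of nodes `X`: a partition of `X` into
`S`-cadet sequences. -/
def IsSBoxingOf {n m : ℕ} (S : Fin n → Fin n → Finset ℤ) (T : PlaneTree n m)
    (X : Finset (Fin n)) (B : Finset (Finset (Fin n))) : Prop :=
  (∀ Y ∈ B, IsSBox S T Y ∧ Y ⊆ X) ∧ ∀ u ∈ X, ∃! Y, Y ∈ B ∧ u ∈ Y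

/-- The contribution `r_S(X)` of a cadet sequence with (injective) node set `X`
(whose length is `X.card`): `∑_{B ∈ U_S(X)} (-1)^(|X| - |B|)`. -/
noncomputable def contrib {n m : ℕ} (S : Fin n → Fin n → Finset ℤ) (T : PlaneTree n m)
    (X : Finset (Fin n)) : ℤ :=
  ∑ B : Finset (Finset (Fin n)),
    if IsSBoxingOf S T X B then (-1 : ℤ) ^ (X.card - B.card) else 0

/-- The contribution `r_S(T) = ∑_{B ∈ U_S(T)} (-1)^(n - |B|)` of the tree `T`. -/
noncomputable def treeContrib {n m : ℕ} (S : Fin n → Fin n → Finset ℤ)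
    (T : PlaneTree n m) : ℤ :=
  contrib S T Finset.univ

/-- The tuple `S` is transitive. -/
def TransitiveS {n : ℕ} (S : Fin n → Fin n → Finset ℤ) : Prop :=
  ∀ i j k : Fin n, i ≠ j → j ≠ k → i ≠ k →
    ∀ s t : ℕ, s ∉ Sminus S i j → t ∉ Sminus S j k → s + t ∉ Sminus S i k

/-- The arrangement `A_S` is almost transitive (`(i : ℕ) = 0` encodes "`i` is the node `1`"). -/
def AlmostTransitive {n : ℕ} (S : Fin n → Fin n → Finset ℤ) : Prop :=
  ∀ i j k : Fin n, i ≠ j → j ≠ k → i ≠ k → (i : ℕ) ≠ 0 → (k : ℕ) ≠ 0 →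
    ∀ s t : ℕ, s ∉ Sminus S i j → t ∉ Sminus S j k → s + t ∉ Sminus S i k

/-- `A_S` is an Ish-type arrangement: `0 ∈ Sᵢⱼ` for all `i < j`, and `Sᵢⱼ = {0}`
whenever `1 < i < j`. -/
def IshType {n : ℕ} (S : Fin n → Fin n → Finset ℤ) : Prop :=
  (∀ i j : Fin n, i < j → (0 : ℤ) ∈ S i j) ∧
    ∀ i j : Fin n, 0 < (i : ℕ) → i < j → S i j = {0}

/-- `A_S` is a nested Ish arrangement. -/
def NestedIsh {n : ℕ} (S : Fin n → Fin n → Finset ℤ) : Prop :=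
  IshType S ∧ ∀ i j k : Fin n, (i : ℕ) = 0 → 0 < (j : ℕ) → j < k → S i j ⊆ S i k

/-- The lower inefficiency `E_l(T)`: the number of lower inefficient nodes of `T`,
i.e. nodes `w` that are left siblings of the node `1` with `lsib w ∉ S⁻_{w,1}`. -/
noncomputable def Elow {n m : ℕ} [NeZero n] (S : Fin n → Fin n → Finset ℤ)
    (T : PlaneTree n m) : ℕ :=
  (Finset.univ.filter fun w : Fin n =>
    w ≠ T.root ∧ (0 : Fin n) ≠ T.root ∧ T.parent w = T.parent 0 ∧ T.pos w < T.pos 0 ∧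
      T.lsib w ∉ Sminus S w 0).card

/-- The upper inefficiency `E_u(T)`: the number of upper inefficient nodes of `T`,
i.e. nodes `w` with parent the node `1` that are not the cadet of `1`, with
`lsib w ∉ S⁻_{1,w}`. -/
noncomputable def Eup {n m : ℕ} [NeZero n] (S : Fin n → Fin n → Finset ℤ)
    (T : PlaneTree n m) : ℕ :=
  (Finset.univ.filter fun w : Fin n =>
    T.IsChild w 0 ∧ ¬ T.IsCadet 0 w ∧ T.lsib w ∉ Sminus S 0 w).card

/-- The class `S(e_l, ℓ_l, e_u, ℓ_u)` of trees in `T^(m)(n)` with nonzero contribution,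
lower/upper inefficiencies `e_l, e_u` and lower/upper 1-lengths `ℓ_l, ℓ_u` (the latter
expressed via the maximal `S`-cadet sequence `{v_{j-ℓ_l}, …, v_j, …, v_{j+ℓ_u}}`
around the node `1 = v j` inside its maximal cadet sequence `(v 1, …, v t)`). -/
def ClassS {n : ℕ} [NeZero n] (S : Fin n → Fin n → Finset ℤ) (el ll eu lu : ℕ) :
    Set (PlaneTree n (mOf S)) :=
  {T | treeContrib S T ≠ 0 ∧ Elow S T = el ∧ Eup S T = eu ∧
    ∃ (t : ℕ) (v : ℕ → Fin n) (j : ℕ), IsMaxCadetSeq T t v ∧ WindowInj v 1 t ∧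
      1 ≤ j ∧ j ≤ t ∧ v j = 0 ∧ ll < j ∧ j + lu ≤ t ∧
      IsMaxSCadetWindow S T t v (j - ll) (j + lu)}

/-- The complement in `ℝ^n` of the union of the hyperplanes `xᵢ - xⱼ = s`
(`i < j`, `s ∈ S i j`) of the arrangement `A_S`. -/
def complementSet {n : ℕ} (S : Fin n → Fin n → Finset ℤ) : Set (Fin n → ℝ) :=
  {x | ∀ i j : Fin n, i < j → ∀ s ∈ S i j, x i - x j ≠ (s : ℝ)}

/-- The number of regions `r_S` of the arrangement `A_S`: the number of connected
components of the complement of its hyperplanes. -/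
noncomputable def numRegions {n : ℕ} (S : Fin n → Fin n → Finset ℤ) : ℕ :=
  Nat.card (ConnectedComponents ↥(complementSet S))

/-- A rooted labeled plane tree with `n` nodes and arbitrary numbers of children:
`nchild u` is the total number of (linearly ordered) children of the node `u`, and
`pos v` the position of the node `v` among the children of its parent (so
`lsib v = pos v` and `rsib v = nchild (parent v) - 1 - pos v`). Children not occupied
by nodes are unlabeled leaves. -/
structure LPTree (n : ℕ) where
  root : Fin n
  parent : Fin n → Fin n
  pos : Fin n → ℕ
  nchild : Fin n → ℕ
  parent_root : parent root = root
  reaches_root : ∀ v : Fin n, ∃ k : ℕ, parent^[k] v = root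
  pos_lt : ∀ v : Fin n, v ≠ root → pos v < nchild (parent v)
  pos_inj : ∀ v w : Fin n, v ≠ root → w ≠ root → parent v = parent w → pos v = pos w → v = w

/-- Membership in the set `𝔗(S)`: the root is the node `1`, the node `1` has `2m+2`
children, every other node has exactly one child, and every node `k ≠ 1` satisfies
`lsib k ∈ S⁻₁ₖ` or `rsib k ∈ S⁻ₖ₁`. -/
def IsFrakT {n : ℕ} [NeZero n] (S : Fin n → Fin n → Finset ℤ) (T : LPTree n) : Prop :=
  T.root = 0 ∧ T.nchild 0 = 2 * mOf S + 2 ∧ (∀ v : Fin n, v ≠ 0 → T.nchild v = 1) ∧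
    ∀ v : Fin n, v ≠ 0 →
      (T.pos v ∈ Sminus S 0 v ∨ (T.nchild (T.parent v) - 1 - T.pos v) ∈ Sminus S v 0)

/-- For an `S`-connected cadet sequence `(v 1, …, v k)` whose maximal `S`-cadet
sequences are the windows `[a r, b r]` (`1 ≤ r ≤ k'`, in increasing order of last index),
`LastIdx a b k' j` is the index of the largest-indexed node of `X_j \ X_{j+1}`
(with `X_{k'+1} = {0}` containing no node of the sequence). -/
def LastIdx (a b : ℕ → ℕ) (k' j : ℕ) : ℕ :=
  ((Finset.Icc (a j) (b j)) \
    (if j = k' then (∅ : Finset ℕ) else Finset.Icc (a (j + 1)) (b (j + 1)))).sup id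

/-- `X_i` reaches `X_j`: the parent of the largest-indexed node of `X_j \ X_{j+1}`
belongs to `X_i`, with the conventions `X_0 = {0}`, `parent (v 1) = 0`
(the index `0` plays the role of `X_0`). -/
def Reaches (a b : ℕ → ℕ) (k' i j : ℕ) : Prop :=
  i < j ∧ j ≤ k' ∧
    ((i = 0 ∧ LastIdx a b k' j = 1) ∨
      (1 ≤ i ∧ 2 ≤ LastIdx a b k' j ∧ a i ≤ LastIdx a b k' j - 1 ∧
        LastIdx a b k' j - 1 ≤ b i))

/-- A successful run of the algorithm: `idx 0 = 0`; at each step, the next term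
`idx (j+1)` is the smallest-indexed maximal `S`-cadet sequence reached by `X_{idx j}`
but not reached by any `X_{idx l}` with `l < j`; the run terminates at `k'`
after `t` steps. -/
def AlgRun (a b : ℕ → ℕ) (k' t : ℕ) (idx : ℕ → ℕ) : Prop :=
  idx 0 = 0 ∧ idx t = k' ∧ (∀ j, j < t → idx j ≠ k') ∧
    ∀ j, j < t →
      Reaches a b k' (idx j) (idx (j + 1)) ∧
        (∀ l, l < j → ¬ Reaches a b k' (idx l) (idx (j + 1))) ∧
        ∀ r, r < idx (j + 1) → Reaches a b k' (idx j) r → ∃ l, l < j ∧ Reaches a b k' (idx l) r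

/-- Condition (2) of Proposition 4.5 (with lower 1-length `i` and upper 1-length `k`),
for the maximal cadet sequence `(v 1, …, v t)` containing the node `1 = v j`. -/
def Cond9 {n m : ℕ} (S : Fin n → Fin n → Finset ℤ) (T : PlaneTree n m)
    (t : ℕ) (v : ℕ → Fin n) (j i k : ℕ) : Prop :=
  i < j ∧ k ≤ t - j ∧
    (∀ s : ℕ, 1 ≤ s → s ≤ t → (s < j - i - 1 ∨ j + k + 1 < s) →
      IsMaxSCadetWindow S T t v s s) ∧
    IsMaxSCadetWindow S T t v (j - i) (j + k) ∧
    (j - i ≠ 1 → IsMaxSCadetWindow S T t v (j - i - 1) (j - 1)) ∧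
    (j - i = 1 → i = 0) ∧
    (j + k ≠ t → IsMaxSCadetWindow S T t v (j + 1) (j + k + 1)) ∧
    (j + k = t → k = 0) ∧
    ∀ a' b' : ℕ, IsMaxSCadetWindow S T t v a' b' →
      ((a' = b' ∧ (a' < j - i - 1 ∨ j + k + 1 < a')) ∨ (a' = j - i ∧ b' = j + k) ∨
        (j - i ≠ 1 ∧ a' = j - i - 1 ∧ b' = j - 1) ∨ (j + k ≠ t ∧ a' = j + 1 ∧ b' = j + k + 1))


namespace S3

variable {n m : ℕ} {S : Fin n → Fin n → Finset ℤ} {T : PlaneTree n m}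

lemma cadet_unique {u w w' : Fin n} (h1 : T.IsCadet u w) (h2 : T.IsCadet u w') : w = w' := by
  have hle : T.pos w ≤ T.pos w' := h2.2 w h1.1
  have hle' : T.pos w' ≤ T.pos w := h1.2 w' h2.1
  exact T.pos_inj w w' h1.1.1 h2.1.1 (h1.1.2.trans h2.1.2.symm) (le_antisymm hle hle')

lemma cadet_parent_unique {u u' w : Fin n} (h1 : T.IsCadet u w) (h2 : T.IsCadet u' w) : u = u' :=
  h1.1.2.symm.trans h2.1.2

lemma cadetWindow_mono {v : ℕ → Fin n} {a b i j : ℕ} (h : IsCadetWindow T v a b)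
    (h1 : 1 ≤ i) (hai : a ≤ i) (hij : i ≤ j) (hjb : j ≤ b) : IsCadetWindow T v i j :=
  ⟨h1, hij, fun p hip hpj => h.2.2 p (lt_of_le_of_lt hai hip) (le_trans hpj hjb)⟩

lemma sCadetWindow_mono {v : ℕ → Fin n} {a b i j : ℕ} (h : IsSCadetWindow S T v a b)
    (h1 : 1 ≤ i) (hai : a ≤ i) (hij : i ≤ j) (hjb : j ≤ b) : IsSCadetWindow S T v i j :=
  ⟨cadetWindow_mono h.1 h1 hai hij hjb,
   fun p q hip hpq hqj => h.2 p q (le_trans hai hip) hpq (le_trans hqj hjb)⟩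

lemma sum_window_shift {v w : ℕ → Fin n} {e i j : ℕ}
    (hw : ∀ p, i ≤ p → p ≤ j → w (p + e) = v p) {i' j' : ℕ} (hi' : i ≤ i') (hj' : j' ≤ j) :
    ∑ p ∈ Finset.Icc (i' + 1) j', T.lsib (v p)
      = ∑ p ∈ Finset.Icc (i' + 1 + e) (j' + e), T.lsib (w p) := by
  rw [← Finset.map_add_right_Icc, Finset.sum_map]
  refine Finset.sum_congr rfl ?_
  intro p hp
  simp only [Finset.mem_Icc] at hp
  simp only [addRightEmbedding_apply]
  rw [hw p (by omega) (by omega)]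

lemma scadet_window_shift {v w : ℕ → Fin n} {e i j : ℕ} (h1 : 1 ≤ i)
    (hw : ∀ p, i ≤ p → p ≤ j → w (p + e) = v p) :
    IsSCadetWindow S T v i j ↔ IsSCadetWindow S T w (i + e) (j + e) := by
  constructor
  · rintro ⟨⟨hi1, hij, hchain⟩, hS⟩
    refine ⟨⟨by omega, by omega, ?_⟩, ?_⟩
    · intro p hip hpj
      have e1 : w p = v (p - e) := by
        have h := hw (p - e) (by omega) (by omega); rw [show p - e + e = p by omega] at h
        exact h
      have e2 : w (p - 1) = v (p - e - 1) := by
        have h := hw (p - e - 1) (by omega) (by omega)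
        rw [show p - e - 1 + e = p - 1 by omega] at h
        exact h
      rw [e1, e2]
      exact hchain (p - e) (by omega) (by omega)
    · intro p q hip hpq hqj
      have e1 : w p = v (p - e) := by
        have h := hw (p - e) (by omega) (by omega); rw [show p - e + e = p by omega] at h
        exact h
      have e2 : w q = v (q - e) := by
        have h := hw (q - e) (by omega) (by omega); rw [show q - e + e = q by omega] at h
        exact h
      rw [e1, e2]
      have hmain := hS (p - e) (q - e) (by omega) (by omega) (by omega)
      have hsum := sum_window_shift (T := T) hw (i' := p - e) (j' := q - e)
        (by omega) (by omega)
      rw [show p - e + 1 + e = p + 1 by omega, show q - e + e = q by omega] at hsum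
      rwa [← hsum]
  · rintro ⟨⟨hi1, hij, hchain⟩, hS⟩
    refine ⟨⟨h1, by omega, ?_⟩, ?_⟩
    · intro p hip hpj
      have e1 : w (p + e) = v p := hw p (by omega) (by omega)
      have e2 : w (p - 1 + e) = v (p - 1) := hw (p - 1) (by omega) (by omega)
      have := hchain (p + e) (by omega) (by omega)
      rw [show p + e - 1 = p - 1 + e by omega, e1, e2] at this
      exact this
    · intro p q hip hpq hqj
      have e1 : w (p + e) = v p := hw p (by omega) (by omega)
      have e2 : w (q + e) = v q := hw q (by omega) (by omega)
      have hmain := hS (p + e) (q + e) (by omega) (by omega) (by omega)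
      rw [e1, e2] at hmain
      have hsum := sum_window_shift (T := T) hw (i' := p) (j' := q) (by omega) (by omega)
      rw [show p + 1 + e = p + e + 1 by omega] at hsum
      rwa [hsum]

/-- Downward/upward rigidity: an ambient maximal cadet sequence containing an anchor
of a cadet window contains the whole window, with a fixed shift. -/
lemma ambient_contains {k0 : ℕ} {V : ℕ → Fin n} (hmax : IsMaxCadetSeq T k0 V)
    {k : ℕ} {v : ℕ → Fin n} (hcad : IsCadetWindow T v 1 k)
    {p0 α : ℕ} (hp01 : 1 ≤ p0) (hp0k : p0 ≤ k) (hα1 : 1 ≤ α) (hαk : α ≤ k0)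
    (hanchor : V α = v p0) :
    ∃ c, α = c + p0 ∧ ∀ p, 1 ≤ p → p ≤ k → 1 ≤ c + p ∧ c + p ≤ k0 ∧ V (c + p) = v p := by
  obtain ⟨⟨hV1, hVk, hVchain⟩, hend, hstart⟩ := hmax
  obtain ⟨h1, hk, hchain⟩ := hcad
  -- downward
  have hdown : ∀ d, d ≤ p0 - 1 → d < α ∧ V (α - d) = v (p0 - d) := by
    intro d
    induction d with
    | zero => intro _; exact ⟨hα1, by simpa using hanchor⟩
    | succ d ih =>
      intro hd
      obtain ⟨hdα, hVd⟩ := ih (by omega)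
      have hcd : T.IsCadet (v (p0 - d - 1)) (v (p0 - d)) := hchain (p0 - d) (by omega) (by omega)
      have hαd2 : α - d ≠ 1 := by
        intro h1'
        apply hstart (v (p0 - d - 1))
        have hv1 : V 1 = v (p0 - d) := by rw [← h1']; exact hVd
        rw [hv1]
        exact hcd
      have hαd2' : 2 ≤ α - d := by omega
      have hcD : T.IsCadet (V (α - d - 1)) (V (α - d)) :=
        hVchain (α - d) (by omega) (by omega)
      have : V (α - d - 1) = v (p0 - d - 1) := by
        rw [hVd] at hcD
        exact cadet_parent_unique hcD hcd
      refine ⟨by omega, ?_⟩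
      rw [show α - (d+1) = α - d - 1 by omega, show p0 - (d+1) = p0 - d - 1 by omega]
      exact this
  have hαp0 : p0 ≤ α := by
    have := (hdown (p0 - 1) le_rfl).1
    omega
  refine ⟨α - p0, by omega, ?_⟩
  -- upward
  have hup : ∀ e, p0 + e ≤ k → α + e ≤ k0 ∧ V (α + e) = v (p0 + e) := by
    intro e
    induction e with
    | zero => intro _; simpa using ⟨hαk, hanchor⟩
    | succ e ih =>
      intro he
      obtain ⟨hek, hVe⟩ := ih (by omega)
      have hcd : T.IsCadet (v (p0 + e)) (v (p0 + e + 1)) := hchain (p0 + e + 1) (by omega) (by omega)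
      have hne : α + e ≠ k0 := by
        intro hE
        apply hend (v (p0 + e + 1))
        rw [← hE, hVe]
        exact hcd.1
      have hcD : T.IsCadet (V (α + e)) (V (α + e + 1)) := by
        have := hVchain (α + e + 1) (by omega) (by omega)
        simpa using this
      rw [hVe] at hcD
      have := cadet_unique hcD hcd
      exact ⟨by omega, by rw [show α + (e+1) = α + e + 1 by omega,
        show p0 + (e+1) = p0 + e + 1 by omega]; exact this⟩
  intro p hp1 hpk
  rcases le_or_gt p p0 with hle | hlt
  · obtain ⟨hd, hV⟩ := hdown (p0 - p) (by omega)
    rw [show p0 - (p0 - p) = p by omega] at hV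
    exact ⟨by omega, by omega, by rw [show α - p0 + p = α - (p0 - p) by omega]; exact hV⟩
  · obtain ⟨hd, hV⟩ := hup (p - p0) (by omega)
    rw [show p0 + (p - p0) = p by omega] at hV
    exact ⟨by omega, by omega, by rw [show α - p0 + p = α + (p - p0) by omega]; exact hV⟩

end S3

namespace S3

variable {n m : ℕ} {S : Fin n → Fin n → Finset ℤ} {T : PlaneTree n m}

/-- Bundled ambient maximal cadet sequence containing the chain `v 1, …, v k`. -/
structure Amb (T : PlaneTree n m) (k : ℕ) (v : ℕ → Fin n) where
  k0 : ℕ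
  V : ℕ → Fin n
  hmax : IsMaxCadetSeq T k0 V
  hinj : WindowInj V 1 k0
  c : ℕ
  h : ∀ p, 1 ≤ p → p ≤ k → 1 ≤ c + p ∧ c + p ≤ k0 ∧ V (c + p) = v p

lemma get_amb {k : ℕ} {v : ℕ → Fin n} (hcad : IsCadetWindow T v 1 k)
    {p0 : ℕ} (hp01 : 1 ≤ p0) (hp0k : p0 ≤ k) {Z : Finset (Fin n)}
    (hZ : IsMaxSCadetSet S T Z) (hmem : v p0 ∈ Z) : Nonempty (Amb T k v) := by
  obtain ⟨k0, V, A, B, hmax, hVinj, hwin, hZeq⟩ := hZ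
  rw [hZeq] at hmem
  simp only [Finset.mem_image, Finset.mem_Icc] at hmem
  obtain ⟨α, ⟨hαA, hαB⟩, hVα⟩ := hmem
  have hB : B ≤ k0 := hwin.1
  have hA : 1 ≤ A ∧ A ≤ B := ⟨hwin.2.1.1.1, hwin.2.1.1.2.1⟩
  obtain ⟨c, -, hc⟩ := ambient_contains hmax hcad hp01 hp0k (by omega) (by omega) hVα
  exact ⟨⟨k0, V, hmax, hVinj, c, hc⟩⟩

lemma chain_in_X {k : ℕ} {v : ℕ → Fin n} (hcad : IsCadetWindow T v 1 k)
    (hinj : WindowInj v 1 k) (amb : Amb T k v)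
    {l : ℕ} {w : ℕ → Fin n} (hw : IsCadetWindow T w 1 l)
    (hsub : ∀ q, 1 ≤ q → q ≤ l → ∃ p, 1 ≤ p ∧ p ≤ k ∧ w q = v p) :
    ∃ d, l + d ≤ k ∧ ∀ q, 1 ≤ q → q ≤ l → w q = v (q + d) := by
  obtain ⟨hl1, hll, hwchain⟩ := hw
  obtain ⟨p1, hp11, hp1k, hwp1⟩ := hsub 1 le_rfl hll
  have key : ∀ q, 1 ≤ q → q ≤ l → (q + (p1 - 1) ≤ k ∧ w q = v (q + (p1 - 1))) := by
    intro q
    induction q with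
    | zero => omega
    | succ q ih =>
      intro hq1 hql
      rcases Nat.eq_or_lt_of_le hq1 with h1 | hlt
      · constructor
        · omega
        · rw [← h1, show 1 + (p1 - 1) = p1 by omega]
          exact hwp1
      · have hq1' : 1 ≤ q := by omega
        obtain ⟨hqd, ihq⟩ := ih (by omega) (by omega)
        have hcd : T.IsCadet (w q) (w (q + 1)) := by
          have := hwchain (q + 1) (by omega) (by omega)
          simpa using this
        obtain ⟨p', hp'1, hp'k, hwp'⟩ := hsub (q + 1) (by omega) hql
        have hlt' : q + (p1 - 1) < k := by
          rcases Nat.lt_or_ge (q + (p1 - 1)) k with h | h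
          · exact h
          · exfalso
            have hQK : q + (p1 - 1) = k := by omega
            rw [hQK] at ihq
            obtain ⟨hck1, hckk0, hVck⟩ := amb.h k (by omega) (by omega)
            rcases Nat.eq_or_lt_of_le hckk0 with hE | hLT
            · apply amb.hmax.2.1 (w (q + 1))
              rw [← hE, hVck, ← ihq]
              exact hcd.1
            · have hcD : T.IsCadet (amb.V (amb.c + k)) (amb.V (amb.c + k + 1)) := by
                have := amb.hmax.1.2.2 (amb.c + k + 1) (by omega) (by omega)
                simpa using this
              rw [hVck, ← ihq] at hcD
              have he1 : w (q + 1) = amb.V (amb.c + k + 1) := cadet_unique hcd hcD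
              obtain ⟨hcp1, hcpk0, hVcp⟩ := amb.h p' hp'1 hp'k
              have he2 : amb.V (amb.c + k + 1) = amb.V (amb.c + p') := by
                rw [he1.symm, hwp', hVcp]
              have := amb.hinj (amb.c + k + 1) (amb.c + p') (by omega) (by omega)
                (by omega) (by omega) he2
              omega
        have hchain := hcad.2.2 (q + (p1 - 1) + 1) (by omega) (by omega)
        simp only [Nat.add_sub_cancel] at hchain
        rw [ihq] at hcd
        have := cadet_unique hcd hchain
        refine ⟨by omega, ?_⟩
        rw [show q + 1 + (p1 - 1) = q + (p1 - 1) + 1 by omega]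
        exact this
  refine ⟨p1 - 1, (key l hll le_rfl).1, fun q hq1 hql => (key q hq1 hql).2⟩

/-- S-boxes contained in a suffix of the chain are exactly the good subintervals. -/
lemma box_iff {k : ℕ} {v : ℕ → Fin n} (hcad : IsCadetWindow T v 1 k)
    (hinj : WindowInj v 1 k) (amb : Amb T k v) (c : ℕ) (Y : Finset (Fin n)) :
    (IsSBox S T Y ∧ Y ⊆ (Finset.Icc (c + 1) k).image v) ↔
      ∃ i j, c + 1 ≤ i ∧ i ≤ j ∧ j ≤ k ∧ IsSCadetWindow S T v i j ∧
        Y = (Finset.Icc i j).image v := by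
  constructor
  · rintro ⟨⟨l, w, hSw, hwinj, hYeq⟩, hYsub⟩
    have hl1 : 1 ≤ l := hSw.1.2.1
    have hsub : ∀ q, 1 ≤ q → q ≤ l → ∃ p, c + 1 ≤ p ∧ p ≤ k ∧ w q = v p := by
      intro q hq1 hql
      have : w q ∈ Y := by
        rw [hYeq]
        exact Finset.mem_image_of_mem w (Finset.mem_Icc.mpr ⟨hq1, hql⟩)
      have := hYsub this
      simp only [Finset.mem_image, Finset.mem_Icc] at this
      obtain ⟨p, ⟨hp1, hpk⟩, hvp⟩ := this
      exact ⟨p, hp1, hpk, hvp.symm⟩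
    obtain ⟨d, hdk, hshift⟩ := chain_in_X hcad hinj amb hSw.1
      (fun q hq1 hql => by obtain ⟨p, h1, h2, h3⟩ := hsub q hq1 hql; exact ⟨p, by omega, h2, h3⟩)
    have hd1 : c + 1 ≤ 1 + d := by
      obtain ⟨p, hp1, hpk, hwp⟩ := hsub 1 le_rfl hl1
      have : v p = v (1 + d) := by rw [← hwp, hshift 1 le_rfl hl1]
      have := hinj p (1 + d) (by omega) (by omega) (by omega) (by omega) this
      omega
    refine ⟨1 + d, l + d, hd1, by omega, by omega, ?_, ?_⟩
    · have hiff := scadet_window_shift (S := S) (T := T) (v := w) (w := v) (e := d)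
        (i := 1) (j := l) le_rfl (fun p hp1 hpl => (hshift p hp1 hpl).symm)
      exact hiff.mp hSw
    · rw [hYeq]
      ext u
      simp only [Finset.mem_image, Finset.mem_Icc]
      constructor
      · rintro ⟨q, ⟨hq1, hql⟩, rfl⟩
        exact ⟨q + d, ⟨by omega, by omega⟩, (hshift q hq1 hql).symm⟩
      · rintro ⟨p, ⟨hp1, hpl⟩, rfl⟩
        exact ⟨p - d, ⟨by omega, by omega⟩, by
          rw [hshift (p - d) (by omega) (by omega), show p - d + d = p by omega]⟩
  · rintro ⟨i, j, hci, hij, hjk, hSv, rfl⟩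
    constructor
    · refine ⟨j - i + 1, fun q => v (q + (i - 1)), ?_, ?_, ?_⟩
      · have hiff := scadet_window_shift (S := S) (T := T)
          (v := fun q => v (q + (i - 1))) (w := v) (e := i - 1)
          (i := 1) (j := j - i + 1) le_rfl (fun p _ _ => rfl)
        rw [show 1 + (i - 1) = i by omega, show j - i + 1 + (i - 1) = j by omega] at hiff
        exact hiff.mpr hSv
      · intro p q hp1 hpl hq1 hql hvpq
        have := hinj (p + (i - 1)) (q + (i - 1)) (by omega) (by omega) (by omega)
          (by omega) hvpq
        omega
      · ext u
        simp only [Finset.mem_image, Finset.mem_Icc]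
        constructor
        · rintro ⟨p, ⟨hp1, hpl⟩, rfl⟩
          exact ⟨p - (i - 1), ⟨by omega, by omega⟩, by
            rw [show p - (i - 1) + (i - 1) = p by omega]⟩
        · rintro ⟨q, ⟨hq1, hql⟩, rfl⟩
          exact ⟨q + (i - 1), ⟨by omega, by omega⟩, rfl⟩
    · intro u hu
      simp only [Finset.mem_image, Finset.mem_Icc] at hu ⊢
      obtain ⟨p, ⟨hp1, hpl⟩, rfl⟩ := hu
      exact ⟨p, ⟨by omega, by omega⟩, rfl⟩

end S3

namespace S3

variable {n m : ℕ} {S : Fin n → Fin n → Finset ℤ} {T : PlaneTree n m}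

/-- Full context of Statement 3. -/
structure Ctx (S : Fin n → Fin n → Finset ℤ) (T : PlaneTree n m) where
  k : ℕ
  v : ℕ → Fin n
  hcad : IsCadetWindow T v 1 k
  hinj : WindowInj v 1 k
  hconn : SConnected S T ((Finset.Icc 1 k).image v)
  k' : ℕ
  hk' : 1 ≤ k'
  a : ℕ → ℕ
  b : ℕ → ℕ
  hboxes : ∀ r, 1 ≤ r → r ≤ k' → 1 ≤ a r ∧ a r ≤ b r ∧ b r ≤ k ∧
      IsMaxSCadetSet S T ((Finset.Icc (a r) (b r)).image v)
  hmono : ∀ r s, 1 ≤ r → r < s → s ≤ k' → b r < b s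
  hall : ∀ Z, IsMaxSCadetSet S T Z → Z ⊆ (Finset.Icc 1 k).image v →
      ∃ r, 1 ≤ r ∧ r ≤ k' ∧ Z = (Finset.Icc (a r) (b r)).image v

variable (C : Ctx S T)

lemma Ctx.k1 : 1 ≤ C.k := by
  have h := C.hboxes 1 le_rfl C.hk'
  omega

lemma Ctx.amb : Nonempty (Amb T C.k C.v) := by
  have h1 := C.hboxes 1 le_rfl C.hk'
  refine get_amb C.hcad h1.1 (h1.2.1.trans h1.2.2.1) h1.2.2.2 ?_
  exact Finset.mem_image_of_mem _ (Finset.mem_Icc.mpr ⟨le_rfl, h1.2.1⟩)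

/-- Certificate for window `r`, rebased: the window's own ambient contains the chain and
the maximal window sits at the shifted endpoints. -/
lemma Ctx.window_cert {r : ℕ} (hr1 : 1 ≤ r) (hrk : r ≤ C.k') :
    ∃ (k2 : ℕ) (V2 : ℕ → Fin n) (c2 : ℕ), IsMaxCadetSeq T k2 V2 ∧ WindowInj V2 1 k2 ∧
      (∀ p, 1 ≤ p → p ≤ C.k → 1 ≤ c2 + p ∧ c2 + p ≤ k2 ∧ V2 (c2 + p) = C.v p) ∧
      IsMaxSCadetWindow S T k2 V2 (c2 + C.a r) (c2 + C.b r) := by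
  obtain ⟨ha1, hab, hbk, hset⟩ := C.hboxes r hr1 hrk
  obtain ⟨k2, V2, A, B, hmax2, hinj2, hwin2, heq⟩ := hset
  have hA1 : 1 ≤ A := hwin2.2.1.1.1
  have hAB : A ≤ B := hwin2.2.1.1.2.1
  have hBk2 : B ≤ k2 := hwin2.1
  -- anchor
  have hanch : C.v (C.a r) ∈ (Finset.Icc A B).image V2 := by
    rw [← heq]; exact Finset.mem_image_of_mem _ (Finset.mem_Icc.mpr ⟨le_rfl, hab⟩)
  simp only [Finset.mem_image, Finset.mem_Icc] at hanch
  obtain ⟨α, ⟨hαA, hαB⟩, hVα⟩ := hanch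
  obtain ⟨c2, -, hc2⟩ := ambient_contains hmax2 C.hcad ha1 (hab.trans hbk)
    (by omega) (by omega) hVα
  -- endpoints
  have himg : (Finset.Icc A B).image V2 = (Finset.Icc (c2 + C.a r) (c2 + C.b r)).image V2 := by
    rw [← heq]
    ext u
    simp only [Finset.mem_image, Finset.mem_Icc]
    constructor
    · rintro ⟨p, ⟨hp1, hp2⟩, rfl⟩
      exact ⟨c2 + p, ⟨by omega, by omega⟩, (hc2 p (by omega) (by omega)).2.2⟩
    · rintro ⟨q, ⟨hq1, hq2⟩, rfl⟩
      refine ⟨q - c2, ⟨by omega, by omega⟩, ?_⟩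
      have h := (hc2 (q - c2) (by omega) (by omega)).2.2
      rw [show c2 + (q - c2) = q by omega] at h
      exact h.symm
  have hmemV : ∀ x y q, 1 ≤ x → x ≤ y → y ≤ k2 → 1 ≤ q → q ≤ k2 →
      V2 q ∈ (Finset.Icc x y).image V2 → x ≤ q ∧ q ≤ y := by
    intro x y q hx hxy hyk hq1 hqk2 hmem
    simp only [Finset.mem_image, Finset.mem_Icc] at hmem
    obtain ⟨p, ⟨hp1, hp2⟩, hVp⟩ := hmem
    have := hinj2 p q (by omega) (by omega) hq1 hqk2 hVp
    omega
  have hcar : 1 ≤ c2 + C.a r ∧ c2 + C.a r ≤ k2 := by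
    have := hc2 (C.a r) ha1 (hab.trans hbk); omega
  have hcbr : 1 ≤ c2 + C.b r ∧ c2 + C.b r ≤ k2 := by
    have := hc2 (C.b r) (ha1.trans hab) hbk; omega
  have hAeq : A = c2 + C.a r := by
    have h1 : A ≤ c2 + C.a r ∧ c2 + C.a r ≤ B := by
      apply hmemV A B (c2 + C.a r) hA1 hAB hBk2 hcar.1 hcar.2
      rw [himg]
      exact Finset.mem_image_of_mem _ (Finset.mem_Icc.mpr ⟨by omega, by omega⟩)
    have h2 : c2 + C.a r ≤ A ∧ A ≤ c2 + C.b r := by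
      apply hmemV (c2 + C.a r) (c2 + C.b r) A hcar.1 (by omega) hcbr.2 hA1 (hAB.trans hBk2)
      rw [← himg]
      exact Finset.mem_image_of_mem _ (Finset.mem_Icc.mpr ⟨le_rfl, hAB⟩)
    omega
  have hBeq : B = c2 + C.b r := by
    have h1 : A ≤ c2 + C.b r ∧ c2 + C.b r ≤ B := by
      apply hmemV A B (c2 + C.b r) hA1 hAB hBk2 hcbr.1 hcbr.2
      rw [himg]
      exact Finset.mem_image_of_mem _ (Finset.mem_Icc.mpr ⟨by omega, by omega⟩)
    have h2 : c2 + C.a r ≤ B ∧ B ≤ c2 + C.b r := by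
      apply hmemV (c2 + C.a r) (c2 + C.b r) B hcar.1 (by omega) hcbr.2 (hA1.trans hAB) hBk2
      rw [← himg]
      exact Finset.mem_image_of_mem _ (Finset.mem_Icc.mpr ⟨hAB, le_rfl⟩)
    omega
  rw [hAeq, hBeq] at hwin2
  exact ⟨k2, V2, c2, hmax2, hinj2, hc2, hwin2⟩

/-- Any `S`-window of the chain fits inside one of the maximal windows. -/
lemma Ctx.good_fits {i j : ℕ} (h1 : 1 ≤ i) (hij : i ≤ j) (hjk : j ≤ C.k)
    (hS : IsSCadetWindow S T C.v i j) :
    ∃ r, 1 ≤ r ∧ r ≤ C.k' ∧ C.a r ≤ i ∧ j ≤ C.b r := by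
  obtain ⟨amb⟩ := C.amb
  have hamb : ∀ p, 1 ≤ p → p ≤ C.k → amb.V (p + amb.c) = C.v p := by
    intro p hp1 hpk
    rw [Nat.add_comm]
    exact (amb.h p hp1 hpk).2.2
  have hci : 1 ≤ amb.c + i ∧ amb.c + i ≤ amb.k0 := by have := amb.h i h1 (hij.trans hjk); omega
  have hcj : amb.c + j ≤ amb.k0 := by have := amb.h j (h1.trans hij) hjk; omega
  have hSV : IsSCadetWindow S T amb.V (amb.c + i) (amb.c + j) := by
    have hiff := scadet_window_shift (S := S) (T := T) (v := C.v) (w := amb.V) (e := amb.c)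
      (i := i) (j := j) h1 (fun p hp1 hpj => hamb p (by omega) (by omega))
    rw [show i + amb.c = amb.c + i by omega, show j + amb.c = amb.c + j by omega] at hiff
    exact hiff.mp hS
  -- extend to a maximal window
  have hsAne : ((Finset.Icc 1 (amb.c + i)).filter
      (fun a' => IsSCadetWindow S T amb.V a' (amb.c + j))).Nonempty :=
    ⟨amb.c + i, Finset.mem_filter.mpr ⟨Finset.mem_Icc.mpr ⟨hci.1, le_rfl⟩, hSV⟩⟩
  set A := ((Finset.Icc 1 (amb.c + i)).filter
      (fun a' => IsSCadetWindow S T amb.V a' (amb.c + j))).min' hsAne with hAdef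
  have hAmem := Finset.mem_filter.mp (Finset.min'_mem _ hsAne)
  have hAIcc := Finset.mem_Icc.mp hAmem.1
  have hAwin : IsSCadetWindow S T amb.V A (amb.c + j) := hAmem.2
  have hsBne : ((Finset.Icc (amb.c + j) amb.k0).filter
      (fun b' => IsSCadetWindow S T amb.V A b')).Nonempty :=
    ⟨amb.c + j, Finset.mem_filter.mpr ⟨Finset.mem_Icc.mpr ⟨le_rfl, hcj⟩, hAwin⟩⟩
  set B := ((Finset.Icc (amb.c + j) amb.k0).filter
      (fun b' => IsSCadetWindow S T amb.V A b')).max' hsBne with hBdef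
  have hBmem := Finset.mem_filter.mp (Finset.max'_mem _ hsBne)
  have hBIcc := Finset.mem_Icc.mp hBmem.1
  have hBwin : IsSCadetWindow S T amb.V A B := hBmem.2
  have hmaxwin : IsMaxSCadetWindow S T amb.k0 amb.V A B := by
    refine ⟨hBIcc.2, hBwin, ?_, ?_⟩
    · rcases Nat.eq_or_lt_of_le hAIcc.1 with hA1 | hA2
      · exact Or.inl hA1.symm
      · refine Or.inr (fun hcon => ?_)
        have hsub : IsSCadetWindow S T amb.V (A - 1) (amb.c + j) :=
          sCadetWindow_mono hcon (by omega) le_rfl (by omega) hBIcc.1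
        have hmem : A - 1 ∈ (Finset.Icc 1 (amb.c + i)).filter
            (fun a' => IsSCadetWindow S T amb.V a' (amb.c + j)) :=
          Finset.mem_filter.mpr ⟨Finset.mem_Icc.mpr ⟨by omega, by omega⟩, hsub⟩
        have := Finset.min'_le _ _ hmem
        omega
    · rcases Nat.eq_or_lt_of_le hBIcc.2 with hBk0 | hBk0
      · exact Or.inl hBk0
      · refine Or.inr (fun hcon => ?_)
        have hmem : B + 1 ∈ (Finset.Icc (amb.c + j) amb.k0).filter
            (fun b' => IsSCadetWindow S T amb.V A b') :=
          Finset.mem_filter.mpr ⟨Finset.mem_Icc.mpr ⟨by omega, by omega⟩, hcon⟩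
        have := Finset.le_max' _ _ hmem
        omega
  set Z := (Finset.Icc A B).image amb.V with hZ
  have hZmax : IsMaxSCadetSet S T Z := ⟨amb.k0, amb.V, A, B, amb.hmax, amb.hinj, hmaxwin, rfl⟩
  have hvi : C.v i ∈ Z := by
    rw [hZ, ← (amb.h i h1 (hij.trans hjk)).2.2]
    exact Finset.mem_image_of_mem _ (Finset.mem_Icc.mpr ⟨by omega, by omega⟩)
  have hvj : C.v j ∈ Z := by
    rw [hZ, ← (amb.h j (h1.trans hij) hjk).2.2]
    exact Finset.mem_image_of_mem _ (Finset.mem_Icc.mpr ⟨by omega, by omega⟩)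
  have hZsub : Z ⊆ (Finset.Icc 1 C.k).image C.v := by
    rcases C.hconn.2.1 Z hZmax with hdisj | hsub
    · exfalso
      have : C.v i ∈ (Finset.Icc 1 C.k).image C.v ∩ Z :=
        Finset.mem_inter.mpr ⟨Finset.mem_image_of_mem _ (Finset.mem_Icc.mpr ⟨h1, hij.trans hjk⟩), hvi⟩
      rw [hdisj] at this
      exact absurd this (Finset.notMem_empty _)
    · exact hsub
  obtain ⟨r, hr1, hrk, hZeq⟩ := C.hall Z hZmax hZsub
  refine ⟨r, hr1, hrk, ?_, ?_⟩
  · rw [hZeq] at hvi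
    simp only [Finset.mem_image, Finset.mem_Icc] at hvi
    obtain ⟨p, ⟨hp1, hp2⟩, hvp⟩ := hvi
    obtain ⟨ha1, hab, hbk, -⟩ := C.hboxes r hr1 hrk
    have := C.hinj p i (by omega) (by omega) h1 (hij.trans hjk) hvp
    omega
  · rw [hZeq] at hvj
    simp only [Finset.mem_image, Finset.mem_Icc] at hvj
    obtain ⟨p, ⟨hp1, hp2⟩, hvp⟩ := hvj
    obtain ⟨ha1, hab, hbk, -⟩ := C.hboxes r hr1 hrk
    have := C.hinj p j (by omega) (by omega) (h1.trans hij) hjk hvp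
    omega

/-- Conversely, any subinterval of a maximal window is an `S`-window of the chain. -/
lemma Ctx.fits_good {r i j : ℕ} (hr1 : 1 ≤ r) (hrk : r ≤ C.k')
    (hai : C.a r ≤ i) (hij : i ≤ j) (hjb : j ≤ C.b r) :
    IsSCadetWindow S T C.v i j := by
  obtain ⟨k2, V2, c2, hmax2, hinj2, hc2, hwin2⟩ := C.window_cert hr1 hrk
  obtain ⟨ha1, hab, hbk, -⟩ := C.hboxes r hr1 hrk
  have hsub : IsSCadetWindow S T V2 (c2 + i) (c2 + j) := by
    apply sCadetWindow_mono hwin2.2.1 (by omega) (by omega) (by omega) (by omega)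
  have hiff := scadet_window_shift (S := S) (T := T) (v := C.v) (w := V2) (e := c2)
    (i := i) (j := j) (by omega) (fun p hp1 hpj => by
      rw [Nat.add_comm]
      exact (hc2 p (by omega) (by omega)).2.2)
  rw [show i + c2 = c2 + i by omega, show j + c2 = c2 + j by omega] at hiff
  exact hiff.mpr hsub

lemma Ctx.coverage {p : ℕ} (hp1 : 1 ≤ p) (hpk : p ≤ C.k) :
    ∃ r, 1 ≤ r ∧ r ≤ C.k' ∧ C.a r ≤ p ∧ p ≤ C.b r := by
  apply C.good_fits hp1 le_rfl hpk
  exact ⟨⟨hp1, le_rfl, fun q h1 h2 => by omega⟩, fun i j hi hij hj => by omega⟩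

lemma Ctx.b_mono {r s : ℕ} (hr1 : 1 ≤ r) (hrs : r ≤ s) (hsk : s ≤ C.k') : C.b r ≤ C.b s := by
  rcases Nat.eq_or_lt_of_le hrs with h | h
  · rw [h]
  · exact (C.hmono r s hr1 h hsk).le

lemma Ctx.a_strict {r s : ℕ} (hr1 : 1 ≤ r) (hrs : r < s) (hsk : s ≤ C.k') : C.a r < C.a s := by
  by_contra hcon
  push_neg at hcon
  obtain ⟨k2, V2, c2, hmax2, hinj2, hc2, hwin2⟩ := C.window_cert hr1 (by omega)
  obtain ⟨ha1, hab, hbk, -⟩ := C.hboxes r hr1 (by omega)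
  obtain ⟨ha1s, habs, hbks, -⟩ := C.hboxes s (by omega) hsk
  have hbrs : C.b r < C.b s := C.hmono r s hr1 hrs hsk
  have hBk2 : c2 + C.b r + 1 ≤ k2 := by
    have := hc2 (C.b r + 1) (by omega) (by omega)
    omega
  have hnotmax : ¬ IsSCadetWindow S T V2 (c2 + C.a r) (c2 + C.b r + 1) := by
    rcases hwin2.2.2.2 with hEnd | hno
    · exfalso
      have := hc2 C.k (by have := C.k1; omega) le_rfl
      omega
    · exact hno
  apply hnotmax
  have hgood : IsSCadetWindow S T C.v (C.a r) (C.b r + 1) :=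
    C.fits_good (r := s) (by omega) hsk (by omega) (by omega) (by omega)
  have hiff := scadet_window_shift (S := S) (T := T) (v := C.v) (w := V2) (e := c2)
    (i := C.a r) (j := C.b r + 1) (by omega) (fun p hp1 hpj => by
      rw [Nat.add_comm]
      exact (hc2 p (by omega) (by omega)).2.2)
  rw [show C.a r + c2 = c2 + C.a r by omega, show C.b r + 1 + c2 = c2 + C.b r + 1 by omega] at hiff
  exact hiff.mp hgood

lemma Ctx.a_mono {r s : ℕ} (hr1 : 1 ≤ r) (hrs : r ≤ s) (hsk : s ≤ C.k') : C.a r ≤ C.a s := by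
  rcases Nat.eq_or_lt_of_le hrs with h | h
  · rw [h]
  · exact (C.a_strict hr1 h hsk).le

lemma Ctx.a_one : C.a 1 = 1 := by
  obtain ⟨r, hr1, hrk, har, hbr⟩ := C.coverage le_rfl C.k1
  have h1 := (C.hboxes 1 le_rfl C.hk').1
  rcases Nat.eq_or_lt_of_le hr1 with h | h
  · rw [← h] at har; omega
  · have := C.a_strict le_rfl h hrk
    omega

lemma Ctx.b_last : C.b C.k' = C.k := by
  obtain ⟨r, hr1, hrk, har, hbr⟩ := C.coverage C.k1 le_rfl
  have h1 := (C.hboxes r hr1 hrk).2.2.1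
  have h2 := (C.hboxes C.k' C.hk' le_rfl).2.2.1
  rcases Nat.eq_or_lt_of_le hrk with h | h
  · rw [← h]; omega
  · have := C.hmono r C.k' hr1 h le_rfl
    omega

lemma Ctx.b_gap {r s : ℕ} (hr1 : 1 ≤ r) (hrs : r ≤ s) (hsk : s ≤ C.k') :
    C.b r + (s - r) ≤ C.b s := by
  induction s with
  | zero => omega
  | succ s ih =>
    rcases Nat.eq_or_lt_of_le hrs with h | h
    · rw [h]; omega
    · have := ih (by omega) (by omega)
      have := C.hmono s (s + 1) (by omega) (by omega) hsk
      omega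

lemma Ctx.k'_le_k : C.k' ≤ C.k := by
  have := C.b_gap le_rfl C.hk' le_rfl
  have h1 := (C.hboxes 1 le_rfl C.hk').1
  have h2 := (C.hboxes 1 le_rfl C.hk').2.1
  have := C.b_last
  omega

/-- a(r+1) ≤ b r + 1 (adjacent-or-overlapping consecutive windows). -/
lemma Ctx.overlap {r : ℕ} (hr1 : 1 ≤ r) (hrk : r < C.k') : C.a (r + 1) ≤ C.b r + 1 := by
  have hbr : C.b r + 1 ≤ C.k := by
    have := C.hmono r C.k' hr1 hrk le_rfl
    have := C.b_last
    omega
  obtain ⟨s, hs1, hsk, has, hbs⟩ := C.coverage (p := C.b r + 1) (by omega) hbr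
  have hrs : r < s := by
    by_contra hcon
    push_neg at hcon
    have := C.b_mono hs1 hcon (by omega)
    omega
  have := C.a_mono (r := r + 1) (s := s) (by omega) (by omega) hsk
  omega

end S3

namespace S3

variable {n m : ℕ} {S : Fin n → Fin n → Finset ℤ} {T : PlaneTree n m}

lemma Ctx.singleton_good (C : Ctx S T) {p : ℕ} (hp1 : 1 ≤ p) :
    IsSCadetWindow S T C.v p p :=
  ⟨⟨hp1, le_rfl, fun q h1 h2 => ((by omega : False).elim)⟩,
   fun i j hi hij hj => ((by omega : False).elim)⟩

/-- The largest `j ≤ k` such that `(v (c+1), …, v j)` is an `S`-window. -/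
noncomputable def Ctx.B (C : Ctx S T) (c : ℕ) : ℕ :=
  if h : ((Finset.Icc (c + 1) C.k).filter
      (fun j => IsSCadetWindow S T C.v (c + 1) j)).Nonempty
  then ((Finset.Icc (c + 1) C.k).filter
      (fun j => IsSCadetWindow S T C.v (c + 1) j)).max' h
  else c + 1

lemma Ctx.B_spec (C : Ctx S T) {c : ℕ} (hck : c < C.k) :
    c + 1 ≤ C.B c ∧ C.B c ≤ C.k ∧ IsSCadetWindow S T C.v (c + 1) (C.B c) ∧
      ∀ j, c + 1 ≤ j → j ≤ C.k → IsSCadetWindow S T C.v (c + 1) j → j ≤ C.B c := by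
  have hne : ((Finset.Icc (c + 1) C.k).filter
      (fun j => IsSCadetWindow S T C.v (c + 1) j)).Nonempty :=
    ⟨c + 1, Finset.mem_filter.mpr ⟨Finset.mem_Icc.mpr ⟨le_rfl, by omega⟩,
      C.singleton_good (by omega)⟩⟩
  rw [Ctx.B, dif_pos hne]
  have hmem := Finset.mem_filter.mp (Finset.max'_mem _ hne)
  have hIcc := Finset.mem_Icc.mp hmem.1
  refine ⟨hIcc.1, hIcc.2, hmem.2, ?_⟩
  intro j h1 h2 h3
  exact Finset.le_max' _ _ (Finset.mem_filter.mpr ⟨Finset.mem_Icc.mpr ⟨h1, h2⟩, h3⟩)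

lemma Ctx.B_mono (C : Ctx S T) {c : ℕ} (hck : c + 1 < C.k) : C.B c ≤ C.B (c + 1) := by
  obtain ⟨h1, h2, h3, h4⟩ := C.B_spec (by omega : c < C.k)
  obtain ⟨h1', h2', h3', h4'⟩ := C.B_spec hck
  rcases Nat.eq_or_lt_of_le h1 with he | hlt
  · omega
  · exact h4' (C.B c) (by omega) h2 (sCadetWindow_mono h3 (by omega) (by omega) (by omega) le_rfl)

/-- The orbit function value. -/
noncomputable def Mrec (k : ℕ) (B : ℕ → ℕ) (c : ℕ) : ℤ :=
  if hck : c = k then 1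
  else if hlt : k < c then 0
  else -∑ x ∈ (Finset.Ioc c (min (B c) k)).attach, Mrec k B x.1
termination_by k - c
decreasing_by
  have hx := x.2
  simp only [Finset.mem_Ioc] at hx
  omega

lemma Mrec_k (k : ℕ) (B : ℕ → ℕ) : Mrec k B k = 1 := by
  rw [Mrec]; simp

lemma Mrec_lt (k : ℕ) (B : ℕ → ℕ) {c : ℕ} (h : c < k) :
    Mrec k B c = -∑ x ∈ Finset.Ioc c (min (B c) k), Mrec k B x := by
  rw [Mrec, dif_neg (by omega), dif_neg (by omega)]
  rw [← Finset.sum_attach (Finset.Ioc c (min (B c) k)) (fun x => Mrec k B x)]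

/-- Boxings: blocks partition, basic facts. -/
lemma boxing_empty_iff (Bx : Finset (Finset (Fin n))) :
    IsSBoxingOf S T (∅ : Finset (Fin n)) Bx ↔ Bx = ∅ := by
  constructor
  · intro h
    by_contra hne
    obtain ⟨Y, hY⟩ := Finset.nonempty_iff_ne_empty.mpr hne
    have hbox := (h.1 Y hY).1
    obtain ⟨l, w, hw, -, hYeq⟩ := hbox
    have : w 1 ∈ Y := by
      rw [hYeq]
      exact Finset.mem_image_of_mem _ (Finset.mem_Icc.mpr ⟨le_rfl, hw.1.2.1⟩)
    have := (h.1 Y hY).2 this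
    exact absurd this (Finset.notMem_empty _)
  · rintro rfl
    exact ⟨fun Y hY => absurd hY (Finset.notMem_empty _),
      fun u hu => absurd hu (Finset.notMem_empty _)⟩

lemma contrib_empty : contrib S T (∅ : Finset (Fin n)) = 1 := by
  rw [contrib]
  have hcon : ∀ Bx : Finset (Finset (Fin n)),
      (if IsSBoxingOf S T (∅ : Finset (Fin n)) Bx then
        ((-1 : ℤ)) ^ ((∅ : Finset (Fin n)).card - Bx.card) else 0)
      = if Bx = (∅ : Finset (Finset (Fin n))) then 1 else 0 := by
    intro Bx
    by_cases h : Bx = ∅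
    · rw [if_pos ((boxing_empty_iff Bx).mpr h), if_pos h, h]
      simp
    · rw [if_neg (fun hc => h ((boxing_empty_iff Bx).mp hc)), if_neg h]
  rw [Finset.sum_congr rfl (fun Bx _ => hcon Bx)]
  simp

lemma boxing_disjoint {X : Finset (Fin n)} {Bx : Finset (Finset (Fin n))}
    (h : IsSBoxingOf S T X Bx) {Y Z : Finset (Fin n)} (hY : Y ∈ Bx) (hZ : Z ∈ Bx)
    (hne : Y ≠ Z) {u : Fin n} (huY : u ∈ Y) : u ∉ Z := by
  intro huZ
  have hu : u ∈ X := (h.1 Y hY).2 huY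
  obtain ⟨W, -, hWuniq⟩ := h.2 u hu
  have e1 := hWuniq Y ⟨hY, huY⟩
  have e2 := hWuniq Z ⟨hZ, huZ⟩
  exact hne (e1.trans e2.symm)

lemma boxing_card_le {X : Finset (Fin n)} {Bx : Finset (Finset (Fin n))}
    (h : IsSBoxingOf S T X Bx) : Bx.card ≤ X.card := by
  have hX : X = Bx.biUnion (fun Y => Y) := by
    ext u
    simp only [Finset.mem_biUnion]
    constructor
    · intro hu
      obtain ⟨Y, hY, -⟩ := h.2 u hu
      exact ⟨Y, hY.1, hY.2⟩
    · rintro ⟨Y, hY, huY⟩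
      exact (h.1 Y hY).2 huY
  have hdisj : ∀ Y ∈ Bx, ∀ Z ∈ Bx, Y ≠ Z → Disjoint Y Z := by
    intro Y hY Z hZ hne
    rw [Finset.disjoint_left]
    intro u huY
    exact boxing_disjoint h hY hZ hne huY
  rw [hX, Finset.card_biUnion hdisj]
  have hone : ∀ Y ∈ Bx, 1 ≤ Y.card := by
    intro Y hY
    obtain ⟨l, w, hw, -, hYeq⟩ := (h.1 Y hY).1
    have : w 1 ∈ Y := by
      rw [hYeq]
      exact Finset.mem_image_of_mem _ (Finset.mem_Icc.mpr ⟨le_rfl, hw.1.2.1⟩)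
    exact Finset.card_pos.mpr ⟨w 1, this⟩
  calc Bx.card = ∑ _Y ∈ Bx, 1 := by simp
  _ ≤ ∑ Y ∈ Bx, Y.card := Finset.sum_le_sum hone

end S3

namespace S3

variable {n m : ℕ} {S : Fin n → Fin n → Finset ℤ} {T : PlaneTree n m}

lemma Ctx.mem_Xc (C : Ctx S T) {p : ℕ} (hp1 : 1 ≤ p) (hpk : p ≤ C.k) (c : ℕ) :
    C.v p ∈ (Finset.Icc (c + 1) C.k).image C.v ↔ c + 1 ≤ p := by
  constructor
  · intro h
    simp only [Finset.mem_image, Finset.mem_Icc] at h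
    obtain ⟨q, ⟨hq1, hq2⟩, hvq⟩ := h
    have := C.hinj q p (by omega) hq2 hp1 hpk hvq
    omega
  · intro h
    exact Finset.mem_image_of_mem _ (Finset.mem_Icc.mpr ⟨h, hpk⟩)

lemma Ctx.card_Xc (C : Ctx S T) {c : ℕ} (hc : c ≤ C.k) :
    ((Finset.Icc (c + 1) C.k).image C.v).card = C.k - c := by
  rw [Finset.card_image_of_injOn, Nat.card_Icc]
  · omega
  · intro p hp q hq hpq
    simp only [Finset.mem_coe, Finset.mem_Icc] at hp hq
    exact C.hinj p q (by omega) hp.2 (by omega) hq.2 hpq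

lemma Ctx.Iv_inj (C : Ctx S T) {i j j' : ℕ} (h1 : 1 ≤ i) (hij : i ≤ j) (hjk : j ≤ C.k)
    (hij' : i ≤ j') (hjk' : j' ≤ C.k)
    (heq : (Finset.Icc i j).image C.v = (Finset.Icc i j').image C.v) : j = j' := by
  have h1' : C.v j ∈ (Finset.Icc i j').image C.v := by
    rw [← heq]; exact Finset.mem_image_of_mem _ (Finset.mem_Icc.mpr ⟨hij, le_rfl⟩)
  have h2' : C.v j' ∈ (Finset.Icc i j).image C.v := by
    rw [heq]; exact Finset.mem_image_of_mem _ (Finset.mem_Icc.mpr ⟨hij', le_rfl⟩)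
  simp only [Finset.mem_image, Finset.mem_Icc] at h1' h2'
  obtain ⟨p, ⟨hp1, hp2⟩, hvp⟩ := h1'
  obtain ⟨q, ⟨hq1, hq2⟩, hvq⟩ := h2'
  have := C.hinj p j (by omega) (by omega) (by omega) hjk hvp
  have := C.hinj q j' (by omega) (by omega) (by omega) hjk' hvq
  omega

lemma Ctx.first_block (C : Ctx S T) (amb : Amb T C.k C.v) {c : ℕ} (hck : c < C.k)
    {Bx : Finset (Finset (Fin n))} (hBx : IsSBoxingOf S T ((Finset.Icc (c + 1) C.k).image C.v) Bx) :
    ∃ c', c < c' ∧ c' ≤ C.B c ∧ (Finset.Icc (c + 1) c').image C.v ∈ Bx ∧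
      ∀ j, c + 1 ≤ j → j ≤ C.k → (Finset.Icc (c + 1) j).image C.v ∈ Bx → j = c' := by
  have hv : C.v (c + 1) ∈ (Finset.Icc (c + 1) C.k).image C.v :=
    (C.mem_Xc (by omega) (by omega) c).mpr le_rfl
  obtain ⟨Y, ⟨hYBx, hYv⟩, hYuniq⟩ := hBx.2 _ hv
  have hbox := (box_iff C.hcad C.hinj amb c Y).mp ⟨(hBx.1 Y hYBx).1, (hBx.1 Y hYBx).2⟩
  obtain ⟨i, j, hci, hij, hjk, hwin, hYeq⟩ := hbox
  have hieq : i = c + 1 := by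
    rw [hYeq] at hYv
    simp only [Finset.mem_image, Finset.mem_Icc] at hYv
    obtain ⟨p, ⟨hp1, hp2⟩, hvp⟩ := hYv
    have := C.hinj p (c + 1) (by omega) (by omega) (by omega) (by omega) hvp
    omega
  subst hieq
  have hjB : j ≤ C.B c := (C.B_spec hck).2.2.2 j hij hjk hwin
  refine ⟨j, by omega, hjB, by rw [← hYeq]; exact hYBx, ?_⟩
  intro j2 hj21 hj2k hj2Bx
  have hv2 : C.v (c + 1) ∈ (Finset.Icc (c + 1) j2).image C.v :=
    Finset.mem_image_of_mem _ (Finset.mem_Icc.mpr ⟨le_rfl, hj21⟩)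
  have := hYuniq _ ⟨hj2Bx, hv2⟩
  rw [hYeq] at this
  exact C.Iv_inj (by omega) hj21 hj2k hij hjk this

/-- First-block recursion for the contribution. -/
lemma Ctx.contrib_rec (C : Ctx S T) (amb : Amb T C.k C.v) {c : ℕ} (hck : c < C.k) :
    contrib S T ((Finset.Icc (c + 1) C.k).image C.v)
      = ∑ c' ∈ Finset.Ioc c (C.B c),
          (-1 : ℤ) ^ (c' - c - 1) * contrib S T ((Finset.Icc (c' + 1) C.k).image C.v) := by
  obtain ⟨hB1, hB2, hBwin, hBmax⟩ := C.B_spec hck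
  have hXcard : ∀ c'', c'' ≤ C.k →
      ((Finset.Icc (c'' + 1) C.k).image C.v).card = C.k - c'' := fun c'' h => C.card_Xc h
  -- fibering function
  set g : Finset (Finset (Fin n)) → ℕ := fun Bx =>
    ((Finset.Ioc c (C.B c)).filter (fun j => (Finset.Icc (c + 1) j).image C.v ∈ Bx)).sup id
    with hg
  have hfib : ∀ Bx, IsSBoxingOf S T ((Finset.Icc (c + 1) C.k).image C.v) Bx →
      ∃ c', c < c' ∧ c' ≤ C.B c ∧ (Finset.Icc (c + 1) c').image C.v ∈ Bx ∧ g Bx = c' := by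
    intro Bx hBx
    obtain ⟨c', hcc', hc'B, hmem, huniq⟩ := C.first_block amb hck hBx
    refine ⟨c', hcc', hc'B, hmem, ?_⟩
    have hfeq : ((Finset.Ioc c (C.B c)).filter
        (fun j => (Finset.Icc (c + 1) j).image C.v ∈ Bx)) = {c'} := by
      ext j
      simp only [Finset.mem_filter, Finset.mem_Ioc, Finset.mem_singleton]
      constructor
      · rintro ⟨⟨hj1, hj2⟩, hjmem⟩
        exact huniq j (by omega) (by omega) hjmem
      · rintro rfl
        exact ⟨⟨hcc', hc'B⟩, hmem⟩
    rw [hg]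
    simp only
    rw [hfeq, Finset.sup_singleton]
    rfl
  -- rewrite contrib as filtered sums
  rw [contrib]
  rw [← Finset.sum_filter_add_sum_filter_not Finset.univ
    (fun Bx => IsSBoxingOf S T ((Finset.Icc (c + 1) C.k).image C.v) Bx)]
  have hzero : ∑ Bx ∈ Finset.univ.filter
      (fun Bx => ¬ IsSBoxingOf S T ((Finset.Icc (c + 1) C.k).image C.v) Bx),
      (if IsSBoxingOf S T ((Finset.Icc (c + 1) C.k).image C.v) Bx then
        (-1 : ℤ) ^ (((Finset.Icc (c + 1) C.k).image C.v).card - Bx.card) else 0) = 0 := by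
    apply Finset.sum_eq_zero
    intro Bx hBx
    simp only [Finset.mem_filter] at hBx
    rw [if_neg hBx.2]
  rw [hzero, add_zero]
  have hmain : ∀ Bx ∈ Finset.univ.filter
      (fun Bx => IsSBoxingOf S T ((Finset.Icc (c + 1) C.k).image C.v) Bx),
      (if IsSBoxingOf S T ((Finset.Icc (c + 1) C.k).image C.v) Bx then
        (-1 : ℤ) ^ (((Finset.Icc (c + 1) C.k).image C.v).card - Bx.card) else 0)
      = (-1 : ℤ) ^ (C.k - c - Bx.card) := by
    intro Bx hBx
    simp only [Finset.mem_filter] at hBx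
    rw [if_pos hBx.2, hXcard c (by omega)]
  rw [Finset.sum_congr rfl hmain]
  -- fiberwise
  rw [← Finset.sum_fiberwise_of_maps_to (g := g) (t := Finset.Ioc c (C.B c))
    (fun Bx hBx => by
      simp only [Finset.mem_filter] at hBx
      obtain ⟨c', h1, h2, -, h4⟩ := hfib Bx hBx.2
      rw [h4]
      exact Finset.mem_Ioc.mpr ⟨h1, h2⟩)]
  refine Finset.sum_congr rfl ?_
  intro c' hc'
  rw [Finset.mem_Ioc] at hc'
  have hc'k : c' ≤ C.k := hc'.2.trans hB2
  rw [contrib, ← Finset.sum_filter, Finset.mul_sum]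
  rw [Finset.filter_filter]
  -- the distinguished first block
  set Y0 : Finset (Fin n) := (Finset.Icc (c + 1) c').image C.v with hY0
  have hY0win : IsSCadetWindow S T C.v (c + 1) c' :=
    sCadetWindow_mono hBwin (by omega) le_rfl (by omega) hc'.2
  have hY0box : IsSBox S T Y0 ∧ Y0 ⊆ (Finset.Icc (c + 1) C.k).image C.v :=
    (box_iff C.hcad C.hinj amb c Y0).mpr ⟨c + 1, c', le_rfl, by omega, hc'k, hY0win, rfl⟩
  have hY0mem : ∀ {p : ℕ}, 1 ≤ p → p ≤ C.k → (C.v p ∈ Y0 ↔ (c + 1 ≤ p ∧ p ≤ c')) := by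
    intro p hp1 hpk
    rw [hY0]
    constructor
    · intro h
      simp only [Finset.mem_image, Finset.mem_Icc] at h
      obtain ⟨q, ⟨hq1, hq2⟩, hvq⟩ := h
      have := C.hinj q p (by omega) (by omega) hp1 hpk hvq
      omega
    · intro h
      exact Finset.mem_image_of_mem _ (Finset.mem_Icc.mpr h)
  have herase : ∀ Bx : Finset (Finset (Fin n)),
      IsSBoxingOf S T ((Finset.Icc (c + 1) C.k).image C.v) Bx → Y0 ∈ Bx →
      IsSBoxingOf S T ((Finset.Icc (c' + 1) C.k).image C.v) (Bx.erase Y0) := by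
    intro Bx hbox hmem
    constructor
    · -- blocks of the erase
      intro Z hZ
      have hZBx := Finset.mem_of_mem_erase hZ
      have hZne : Z ≠ Y0 := Finset.ne_of_mem_erase hZ
      refine ⟨(hbox.1 Z hZBx).1, ?_⟩
      obtain ⟨i2, j2, hi2, hij2, hj2, hwin2, hZeq⟩ :=
        (box_iff C.hcad C.hinj amb c Z).mp ⟨(hbox.1 Z hZBx).1, (hbox.1 Z hZBx).2⟩
      have hi2c' : c' + 1 ≤ i2 := by
        by_contra hcon
        push_neg at hcon
        have hvi2Y0 : C.v i2 ∈ Y0 := (hY0mem (by omega) (by omega)).mpr ⟨hi2, by omega⟩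
        have hvi2Z : C.v i2 ∈ Z := by
          rw [hZeq]
          exact Finset.mem_image_of_mem _ (Finset.mem_Icc.mpr ⟨le_rfl, hij2⟩)
        exact boxing_disjoint hbox hZBx hmem hZne hvi2Z hvi2Y0
      rw [hZeq]
      intro u hu
      simp only [Finset.mem_image, Finset.mem_Icc] at hu ⊢
      obtain ⟨p, ⟨hp1, hp2⟩, rfl⟩ := hu
      exact ⟨p, ⟨by omega, by omega⟩, rfl⟩
    · -- covering for the erase
      intro u hu
      simp only [Finset.mem_image, Finset.mem_Icc] at hu
      obtain ⟨p, ⟨hp1, hp2⟩, rfl⟩ := hu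
      have huX : C.v p ∈ (Finset.Icc (c + 1) C.k).image C.v :=
        (C.mem_Xc (by omega) (by omega) c).mpr (by omega)
      obtain ⟨Z, ⟨hZBx, hZu⟩, hZuniq⟩ := hbox.2 _ huX
      have hZne : Z ≠ Y0 := by
        intro hcon
        rw [hcon] at hZu
        have := (hY0mem (by omega) (by omega)).mp hZu
        omega
      refine ⟨Z, ⟨Finset.mem_erase.mpr ⟨hZne, hZBx⟩, hZu⟩, ?_⟩
      rintro W ⟨hW, hWu⟩
      exact hZuniq W ⟨Finset.mem_of_mem_erase hW, hWu⟩
  refine Finset.sum_bij' (i := fun Bx _ => Bx.erase Y0)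
    (j := fun Bx' _ => insert Y0 Bx') ?_ ?_ ?_ ?_ ?_
  · -- forward membership
    intro Bx hBx
    simp only [Finset.mem_filter, Finset.mem_univ, true_and] at hBx
    obtain ⟨hbox, hgc⟩ := hBx
    obtain ⟨c'', h1, h2, hmem, h4⟩ := hfib Bx hbox
    have hc'' : c'' = c' := by rw [← h4, hgc]
    rw [hc''] at h1 h2 hmem
    simp only [Finset.mem_filter, Finset.mem_univ, true_and]
    exact herase Bx hbox hmem
  · -- backward membership
    intro Bx' hBx'
    simp only [Finset.mem_filter, Finset.mem_univ, true_and] at hBx'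
    have hY0notin : Y0 ∉ Bx' := by
      intro hcon
      have hsub := (hBx'.1 Y0 hcon).2
      have hvY0 : C.v (c + 1) ∈ Y0 := (hY0mem (by omega) (by omega)).mpr ⟨le_rfl, by omega⟩
      have := hsub hvY0
      rw [C.mem_Xc (by omega) (by omega) c'] at this
      omega
    have hboxins : IsSBoxingOf S T ((Finset.Icc (c + 1) C.k).image C.v) (insert Y0 Bx') := by
      constructor
      · intro Z hZ
        rcases Finset.mem_insert.mp hZ with rfl | hZBx'
        · exact hY0box
        · refine ⟨(hBx'.1 Z hZBx').1, ?_⟩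
          intro u hu
          have := (hBx'.1 Z hZBx').2 hu
          simp only [Finset.mem_image, Finset.mem_Icc] at this ⊢
          obtain ⟨p, ⟨hp1, hp2⟩, rfl⟩ := this
          exact ⟨p, ⟨by omega, hp2⟩, rfl⟩
      · intro u hu
        simp only [Finset.mem_image, Finset.mem_Icc] at hu
        obtain ⟨p, ⟨hp1, hp2⟩, rfl⟩ := hu
        rcases le_or_gt p c' with hpc' | hpc'
        · refine ⟨Y0, ⟨Finset.mem_insert_self _ _,
            (hY0mem (by omega) (by omega)).mpr ⟨by omega, hpc'⟩⟩, ?_⟩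
          rintro W ⟨hW, hWu⟩
          rcases Finset.mem_insert.mp hW with rfl | hWBx'
          · rfl
          · exfalso
            have := (hBx'.1 W hWBx').2 hWu
            rw [C.mem_Xc (by omega) (by omega) c'] at this
            omega
        · have huX' : C.v p ∈ (Finset.Icc (c' + 1) C.k).image C.v :=
            (C.mem_Xc (by omega) (by omega) c').mpr (by omega)
          obtain ⟨Z, ⟨hZBx', hZu⟩, hZuniq⟩ := hBx'.2 _ huX'
          refine ⟨Z, ⟨Finset.mem_insert_of_mem hZBx', hZu⟩, ?_⟩
          rintro W ⟨hW, hWu⟩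
          rcases Finset.mem_insert.mp hW with rfl | hWBx'
          · exfalso
            have := (hY0mem (by omega) (by omega)).mp hWu
            omega
          · exact hZuniq W ⟨hWBx', hWu⟩
    simp only [Finset.mem_filter, Finset.mem_univ, true_and]
    refine ⟨hboxins, ?_⟩
    obtain ⟨c'', h1, h2, hmem, h4⟩ := hfib _ hboxins
    have hceq : c'' = c' := by
      rcases Finset.mem_insert.mp hmem with heq | hmemBx'
      · rw [hY0] at heq
        exact C.Iv_inj (by omega) (by omega) (h2.trans hB2) (by omega) hc'k heq
      · exfalso
        have hv1 : C.v (c + 1) ∈ (Finset.Icc (c + 1) c'').image C.v :=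
          Finset.mem_image_of_mem _ (Finset.mem_Icc.mpr ⟨le_rfl, by omega⟩)
        have := (hBx'.1 _ hmemBx').2 hv1
        rw [C.mem_Xc (by omega) (by omega) c'] at this
        omega
    rw [h4, hceq]
  · -- left inverse
    intro Bx hBx
    simp only [Finset.mem_filter, Finset.mem_univ, true_and] at hBx
    obtain ⟨hbox, hgc⟩ := hBx
    obtain ⟨c'', h1, h2, hmem, h4⟩ := hfib Bx hbox
    have hc'' : c'' = c' := by rw [← h4, hgc]
    rw [hc''] at h1 h2 hmem
    exact Finset.insert_erase hmem
  · -- right inverse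
    intro Bx' hBx'
    simp only [Finset.mem_filter, Finset.mem_univ, true_and] at hBx'
    have hY0notin : Y0 ∉ Bx' := by
      intro hcon
      have hsub := (hBx'.1 Y0 hcon).2
      have hvY0 : C.v (c + 1) ∈ Y0 := (hY0mem (by omega) (by omega)).mpr ⟨le_rfl, by omega⟩
      have := hsub hvY0
      rw [C.mem_Xc (by omega) (by omega) c'] at this
      omega
    exact Finset.erase_insert hY0notin
  · -- values
    intro Bx hBx
    simp only [Finset.mem_filter, Finset.mem_univ, true_and] at hBx
    obtain ⟨hbox, hgc⟩ := hBx
    obtain ⟨c'', h1, h2, hmem, h4⟩ := hfib Bx hbox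
    have hc'' : c'' = c' := by rw [← h4, hgc]
    rw [hc''] at h1 h2 hmem
    have hcard : (Bx.erase Y0).card + 1 = Bx.card := by
      rw [Finset.card_erase_of_mem hmem]
      have : 1 ≤ Bx.card := Finset.card_pos.mpr ⟨Y0, hmem⟩
      omega
    have hcardle : Bx.card ≤ C.k - c := by
      have := boxing_card_le hbox
      rwa [C.card_Xc (by omega)] at this
    have hcardle' : (Bx.erase Y0).card ≤ C.k - c' := by
      have := boxing_card_le (herase Bx hbox hmem)
      rwa [C.card_Xc hc'k] at this
    rw [C.card_Xc hc'k]
    show ((-1 : ℤ)) ^ (C.k - c - Bx.card)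
      = (-1) ^ (c' - c - 1) * (-1) ^ (C.k - c' - (Bx.erase Y0).card)
    rw [show C.k - c - Bx.card = (c' - c - 1) + ((C.k - c') - (Bx.erase Y0).card) by omega]
    rw [pow_add]

end S3

namespace S3

variable {n m : ℕ} {S : Fin n → Fin n → Finset ℤ} {T : PlaneTree n m}

lemma Mrec_gt (k : ℕ) (B : ℕ → ℕ) {c : ℕ} (h : k < c) : Mrec k B c = 0 := by
  rw [Mrec, dif_neg (by omega), dif_pos h]

lemma Ctx.contrib_eq_Mrec (C : Ctx S T) (amb : Amb T C.k C.v) :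
    ∀ c, c ≤ C.k → contrib S T ((Finset.Icc (c + 1) C.k).image C.v)
      = (-1 : ℤ) ^ (C.k - c) * Mrec C.k C.B c := by
  have H : ∀ d c, c ≤ C.k → C.k - c = d →
      contrib S T ((Finset.Icc (c + 1) C.k).image C.v)
        = (-1 : ℤ) ^ (C.k - c) * Mrec C.k C.B c := by
    intro d
    induction d using Nat.strong_induction_on with
    | _ d ih =>
      intro c hck hd
      rcases Nat.eq_or_lt_of_le hck with hE | hlt
      · rw [hE, Finset.Icc_eq_empty (by omega), Finset.image_empty, contrib_empty,
          Nat.sub_self, Mrec_k]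
        simp
      · obtain ⟨hB1, hB2, -, -⟩ := C.B_spec hlt
        rw [C.contrib_rec amb hlt, Mrec_lt C.k C.B hlt, min_eq_left hB2]
        rw [mul_neg, Finset.mul_sum, ← Finset.sum_neg_distrib]
        refine Finset.sum_congr rfl ?_
        intro c' hc'
        rw [Finset.mem_Ioc] at hc'
        have hc'k : c' ≤ C.k := hc'.2.trans hB2
        rw [ih (C.k - c') (by omega) c' hc'k rfl]
        have hsgn : ((-1 : ℤ)) ^ (c' - c - 1) * (-1) ^ (C.k - c') = -(-1) ^ (C.k - c) := by
          have h1 : c' - c - 1 + (C.k - c') = C.k - c - 1 := by omega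
          have h2 : C.k - c = C.k - c - 1 + 1 := by omega
          rw [← pow_add, h1]
          conv_rhs => rw [h2]
          rw [pow_succ]
          ring
        rw [← mul_assoc, hsgn]
        ring
  exact fun c hc => H (C.k - c) c hc rfl

/-- Cumulative suffix sums of `Mrec`. -/
noncomputable def Fhat (k : ℕ) (B : ℕ → ℕ) (c : ℕ) : ℤ :=
  Mrec k B c + ∑ x ∈ Finset.Ioc c k, Mrec k B x

lemma Fhat_k (k : ℕ) (B : ℕ → ℕ) : Fhat k B k = 1 := by
  rw [Fhat, Mrec_k, Finset.Ioc_self, Finset.sum_empty, add_zero]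

lemma Fhat_top (k : ℕ) (B : ℕ → ℕ) : Fhat k B (k + 1) = 0 := by
  rw [Fhat, Mrec_gt k B (by omega), Finset.Ioc_eq_empty (by omega), Finset.sum_empty, add_zero]

lemma Mrec_eq_Fhat (k : ℕ) (B : ℕ → ℕ) {c : ℕ} (h : c ≤ k) :
    Mrec k B c = Fhat k B c - Fhat k B (c + 1) := by
  rcases Nat.eq_or_lt_of_le h with hE | hlt
  · rw [hE, Fhat_k, Fhat_top, Mrec_k]
    norm_num
  · rw [Fhat, Fhat]
    have hsplit : Finset.Ioc c k = insert (c + 1) (Finset.Ioc (c + 1) k) := by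
      ext x
      simp only [Finset.mem_Ioc, Finset.mem_insert]
      omega
    rw [hsplit, Finset.sum_insert (by simp)]
    ring

lemma Fhat_step (k : ℕ) (B : ℕ → ℕ) {c : ℕ} (hck : c < k) (hB1 : c ≤ B c) (hB2 : B c ≤ k) :
    Fhat k B c = Fhat k B (B c + 1) := by
  have hIoc : Finset.Ioc c (B c) ∪ Finset.Ioc (B c) k = Finset.Ioc c k := by
    ext x
    simp only [Finset.mem_union, Finset.mem_Ioc]
    omega
  have hdisj : Disjoint (Finset.Ioc c (B c)) (Finset.Ioc (B c) k) := by
    rw [Finset.disjoint_left]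
    intro x hx hy
    simp only [Finset.mem_Ioc] at hx hy
    omega
  have hsum : ∑ x ∈ Finset.Ioc c k, Mrec k B x
      = (∑ x ∈ Finset.Ioc c (B c), Mrec k B x) + ∑ x ∈ Finset.Ioc (B c) k, Mrec k B x := by
    rw [← hIoc, Finset.sum_union hdisj]
  have hM : Mrec k B c = -∑ x ∈ Finset.Ioc c (B c), Mrec k B x := by
    rw [Mrec_lt k B hck, min_eq_left hB2]
  rcases Nat.eq_or_lt_of_le hB2 with hE | hlt
  · rw [Fhat, hsum, hM, hE, Finset.Ioc_self, Finset.sum_empty, add_zero, Fhat_top]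
    ring
  · have hsplit : Finset.Ioc (B c) k = insert (B c + 1) (Finset.Ioc (B c + 1) k) := by
      ext x
      simp only [Finset.mem_Ioc, Finset.mem_insert]
      omega
    rw [Fhat, hsum, hM, Fhat, hsplit, Finset.sum_insert (by simp)]
    ring

/-- Two-step descent along a chase sequence. -/
lemma chase_desc (F : ℕ → ℤ) (y : ℕ → ℕ) (t : ℕ)
    (hstep : ∀ j, j + 2 ≤ t + 1 → F (y j) = F (y (j + 2))) :
    ∀ d j, j + 2 * d ≤ t + 1 → F (y j) = F (y (j + 2 * d)) := by
  intro d
  induction d with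
  | zero => intro j _; norm_num
  | succ d ih =>
    intro j hj
    rw [show j + 2 * (d + 1) = (j + 2) + 2 * d by omega]
    rw [hstep j (by omega)]
    exact ih (j + 2) (by omega)

/-- The largest window index `r` with `a r ≤ c + 1`. -/
noncomputable def Ctx.tau (C : Ctx S T) (c : ℕ) : ℕ :=
  ((Finset.Icc 1 C.k').filter (fun r => C.a r ≤ c + 1)).max'
    ⟨1, Finset.mem_filter.mpr ⟨Finset.mem_Icc.mpr ⟨le_rfl, C.hk'⟩, by rw [C.a_one]; omega⟩⟩

lemma Ctx.tau_spec (C : Ctx S T) (c : ℕ) :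
    1 ≤ C.tau c ∧ C.tau c ≤ C.k' ∧ C.a (C.tau c) ≤ c + 1 ∧
      ∀ r, 1 ≤ r → r ≤ C.k' → C.a r ≤ c + 1 → r ≤ C.tau c := by
  have hne : ((Finset.Icc 1 C.k').filter (fun r => C.a r ≤ c + 1)).Nonempty :=
    ⟨1, Finset.mem_filter.mpr ⟨Finset.mem_Icc.mpr ⟨le_rfl, C.hk'⟩, by rw [C.a_one]; omega⟩⟩
  have htau : C.tau c = ((Finset.Icc 1 C.k').filter (fun r => C.a r ≤ c + 1)).max' hne := rfl
  have hmem := Finset.mem_filter.mp (Finset.max'_mem _ hne)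
  have hIcc := Finset.mem_Icc.mp hmem.1
  rw [htau]
  refine ⟨hIcc.1, hIcc.2, hmem.2, ?_⟩
  intro r h1 h2 h3
  exact Finset.le_max' ((Finset.Icc 1 C.k').filter (fun r => C.a r ≤ c + 1)) r
    (Finset.mem_filter.mpr ⟨Finset.mem_Icc.mpr ⟨h1, h2⟩, h3⟩)

lemma Ctx.tau_mono (C : Ctx S T) {c c' : ℕ} (h : c ≤ c') : C.tau c ≤ C.tau c' := by
  obtain ⟨h1, h2, h3, -⟩ := C.tau_spec c
  obtain ⟨-, -, -, h4'⟩ := C.tau_spec c'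
  exact h4' _ h1 h2 (by omega)

lemma Ctx.b_tau_ge (C : Ctx S T) {c : ℕ} (hck : c < C.k) : c + 1 ≤ C.b (C.tau c) := by
  obtain ⟨r0, hr01, hr0k, har0, hbr0⟩ := C.coverage (p := c + 1) (by omega) (by omega)
  obtain ⟨h1, h2, -, h4⟩ := C.tau_spec c
  have := C.b_mono hr01 (h4 r0 hr01 hr0k har0) h2
  omega

lemma Ctx.B_eq (C : Ctx S T) {c : ℕ} (hck : c < C.k) : C.B c = C.b (C.tau c) := by
  obtain ⟨ht1, ht2, ht3, ht4⟩ := C.tau_spec c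
  obtain ⟨hB1, hB2, hBwin, hBmax⟩ := C.B_spec hck
  have hbk : C.b (C.tau c) ≤ C.k := by
    have := C.b_mono ht1 ht2 le_rfl
    have := C.b_last
    omega
  apply le_antisymm
  · obtain ⟨r, hr1, hrk, har, hbr⟩ := C.good_fits (by omega) hB1 hB2 hBwin
    have hrt : r ≤ C.tau c := ht4 r hr1 hrk har
    have := C.b_mono hr1 hrt ht2
    omega
  · apply hBmax _ (C.b_tau_ge hck) hbk
    exact C.fits_good ht1 ht2 ht3 (C.b_tau_ge hck) le_rfl

end S3

namespace S3

variable {n m : ℕ} {S : Fin n → Fin n → Finset ℤ} {T : PlaneTree n m}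
variable (C : Ctx S T)

/-- `P j = LastIdx j - 1`. -/
noncomputable def Ctx.P (j : ℕ) : ℕ := if j = C.k' then C.k - 1 else C.a (j + 1) - 2

/-- `bt 0 = 0`, `bt i = b i`. -/
noncomputable def Ctx.bt (i : ℕ) : ℕ := if i = 0 then 0 else C.b i

lemma Ctx.a_gap {r s : ℕ} (hr1 : 1 ≤ r) (hrs : r ≤ s) (hsk : s ≤ C.k') :
    C.a r + (s - r) ≤ C.a s := by
  induction s with
  | zero => omega
  | succ s ih =>
    rcases Nat.eq_or_lt_of_le hrs with h | h
    · rw [h]; omega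
    · have := ih (by omega) (by omega)
      have := C.a_strict (r := s) (s := s + 1) (by omega) (by omega) hsk
      omega

lemma Ctx.a_two {j : ℕ} (h2 : 2 ≤ j) (hjk : j ≤ C.k') : 2 ≤ C.a j := by
  have := C.a_gap (r := 1) (s := j) le_rfl (by omega) hjk
  have := C.a_one
  omega

lemma Ctx.lastIdx_eq {j : ℕ} (hj1 : 1 ≤ j) (hjk : j ≤ C.k') :
    LastIdx C.a C.b C.k' j = C.P j + 1 := by
  obtain ⟨haj1, hajb, hbjk, -⟩ := C.hboxes j hj1 hjk
  rcases Nat.eq_or_lt_of_le hjk with hE | hlt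
  · rw [LastIdx, if_pos hE, Finset.sdiff_empty, Ctx.P, if_pos hE]
    have hbk : C.b j = C.k := by rw [hE]; exact C.b_last
    apply le_antisymm
    · apply Finset.sup_le
      intro x hx
      rw [Finset.mem_Icc] at hx
      simp only [id]
      omega
    · have : C.b j ∈ Finset.Icc (C.a j) (C.b j) := Finset.mem_Icc.mpr ⟨hajb, le_rfl⟩
      have := Finset.le_sup (f := id) this
      simp only [id] at this
      omega
  · rw [LastIdx, if_neg (by omega), Ctx.P, if_neg (by omega)]
    obtain ⟨haj1', hajb', hbjk', -⟩ := C.hboxes (j + 1) (by omega) hlt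
    have hastrict : C.a j < C.a (j + 1) := C.a_strict hj1 (by omega) hlt
    have hbmono : C.b j < C.b (j + 1) := C.hmono j (j + 1) hj1 (by omega) hlt
    have hov : C.a (j + 1) ≤ C.b j + 1 := C.overlap hj1 hlt
    have ha2 : 2 ≤ C.a (j + 1) := C.a_two (by omega) hlt
    apply le_antisymm
    · apply Finset.sup_le
      intro x hx
      simp only [Finset.mem_sdiff, Finset.mem_Icc, not_and, not_le] at hx
      simp only [id]
      rcases Nat.lt_or_ge x (C.a (j + 1)) with h | h
      · omega
      · have := hx.2 h
        omega
    · have hmem : C.a (j + 1) - 1 ∈ Finset.Icc (C.a j) (C.b j) \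
          Finset.Icc (C.a (j + 1)) (C.b (j + 1)) := by
        simp only [Finset.mem_sdiff, Finset.mem_Icc, not_and, not_le]
        constructor
        · omega
        · intro h
          omega
      have := Finset.le_sup (f := id) hmem
      simp only [id] at this
      omega

lemma Ctx.k_two (h : 2 ≤ C.k') : 2 ≤ C.k := by
  have h1 := (C.hboxes 1 le_rfl (by omega)).2.1
  have h2 := (C.hboxes 1 le_rfl (by omega)).1
  have := C.hmono 1 C.k' le_rfl (by omega) le_rfl
  have := C.b_last
  omega

lemma Ctx.P_ge_one {j : ℕ} (h2 : 2 ≤ j) (hjk : j ≤ C.k') : 1 ≤ C.P j := by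
  rw [Ctx.P]
  split_ifs with h
  · have := C.k_two (by omega)
    omega
  · have h2k : 2 ≤ C.k' := by omega
    have := C.a_two (j := 2) le_rfl (by omega)
    have := C.a_gap (r := 2) (s := j + 1) (by omega) (by omega) (by omega)
    omega

lemma Ctx.P_strict {i j : ℕ} (hi1 : 1 ≤ i) (hij : i < j) (hjk : j ≤ C.k') :
    C.P i < C.P j := by
  rw [Ctx.P, Ctx.P]
  have hik : i < C.k' := by omega
  rw [if_neg (by omega)]
  obtain ⟨hai1, haib, hbik, -⟩ := C.hboxes (i + 1) (by omega) hik
  have ha2i : 2 ≤ C.a (i + 1) := C.a_two (by omega) hik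
  split_ifs with h
  · -- j = k'
    have hbk := C.b_last
    have : C.b (i + 1) ≤ C.k := by
      have := C.b_mono (r := i + 1) (s := C.k') (by omega) (by omega) le_rfl
      omega
    omega
  · have := C.a_strict (r := i + 1) (s := j + 1) (by omega) (by omega) (by omega)
    omega

lemma Ctx.a_le_P {i j : ℕ} (hi1 : 1 ≤ i) (hij : i < j) (hjk : j ≤ C.k') :
    C.a i ≤ C.P j := by
  rw [Ctx.P]
  split_ifs with h
  · have := C.a_gap (r := i) (s := C.k') hi1 (by omega) le_rfl
    have hk := C.b_last
    obtain ⟨h1, h2, h3, -⟩ := C.hboxes C.k' C.hk' le_rfl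
    omega
  · have := C.a_gap (r := i) (s := j + 1) hi1 (by omega) (by omega)
    omega

lemma Ctx.P_zero_iff {j : ℕ} (hj1 : 1 ≤ j) (hjk : j ≤ C.k') :
    C.P j = 0 ↔ j = 1 ∧ C.P 1 = 0 := by
  constructor
  · intro h
    rcases Nat.eq_or_lt_of_le hj1 with hE | hlt
    · exact ⟨hE.symm, by rw [← hE] at h; exact h⟩
    · exfalso
      have := C.P_ge_one (by omega) hjk
      omega
  · rintro ⟨rfl, h⟩
    exact h

/-- The characterization of `Reaches`. -/
lemma Ctx.reaches_iff (i j : ℕ) :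
    Reaches C.a C.b C.k' i j ↔ (i < j ∧ j ≤ C.k' ∧ C.P j ≤ C.bt i) := by
  constructor
  · rintro ⟨hij, hjk, hcase⟩
    have hL := C.lastIdx_eq (by omega) hjk
    refine ⟨hij, hjk, ?_⟩
    rcases hcase with ⟨rfl, h1⟩ | ⟨hi1, h2, h3, h4⟩
    · rw [Ctx.bt, if_pos rfl]
      omega
    · rw [Ctx.bt, if_neg (by omega)]
      omega
  · rintro ⟨hij, hjk, hP⟩
    have hL := C.lastIdx_eq (by omega) hjk
    refine ⟨hij, hjk, ?_⟩
    rcases Nat.eq_or_lt_of_le (Nat.zero_le i) with hE | hi1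
    · left
      rw [Ctx.bt, if_pos hE.symm] at hP
      exact ⟨hE.symm, by omega⟩
    · right
      rw [Ctx.bt, if_neg (by omega)] at hP
      have hP1 : 1 ≤ C.P j := C.P_ge_one (by omega) hjk
      have haP : C.a i ≤ C.P j := C.a_le_P (by omega) (by omega) hjk
      refine ⟨by omega, by omega, by omega, by omega⟩

lemma Ctx.bt_mono {i i' : ℕ} (hii' : i ≤ i') (hi'k : i' ≤ C.k') : C.bt i ≤ C.bt i' := by
  rw [Ctx.bt, Ctx.bt]
  split_ifs with h1 h2
  · omega
  · omega
  · omega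
  · exact C.b_mono (by omega) hii' hi'k

lemma Ctx.bt_strict {i i' : ℕ} (hii' : i < i') (hi'k : i' ≤ C.k') : C.bt i < C.bt i' := by
  rw [Ctx.bt, Ctx.bt]
  have hb1 : 1 ≤ C.b i' := by
    obtain ⟨h1, h2, -, -⟩ := C.hboxes i' (by omega) hi'k
    omega
  split_ifs with h1 h2
  · omega
  · omega
  · omega
  · exact C.hmono i i' (by omega) hii' hi'k

lemma Ctx.bt_last : C.bt C.k' = C.k := by
  rw [Ctx.bt, if_neg (by have := C.hk'; omega)]
  exact C.b_last

end S3

namespace S3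

variable {n m : ℕ} {S : Fin n → Fin n → Finset ℤ} {T : PlaneTree n m}

lemma Ctx.success (C : Ctx S T) (amb : Amb T C.k C.v) {t : ℕ} {idx : ℕ → ℕ}
    (hrun : AlgRun C.a C.b C.k' t idx) :
    contrib S T ((Finset.Icc 1 C.k).image C.v) = (-1 : ℤ) ^ (C.k - t) := by
  obtain ⟨h0, hT, hneq, hstep⟩ := hrun
  have ht1 : 1 ≤ t := by
    by_contra h
    have : t = 0 := by omega
    rw [this] at hT
    rw [h0] at hT
    have := C.hk'
    omega
  have hR : ∀ j, j < t → idx j < idx (j + 1) ∧ idx (j + 1) ≤ C.k' ∧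
      C.P (idx (j + 1)) ≤ C.bt (idx j) := fun j hj => (C.reaches_iff _ _).mp (hstep j hj).1
  have hmono_idx : ∀ j', j' ≤ t → ∀ j, j ≤ j' → idx j ≤ idx j' := by
    intro j'
    induction j' with
    | zero => intro _ j hj; rw [show j = 0 by omega]
    | succ j' ih =>
      intro hj't j hj
      rcases Nat.eq_or_lt_of_le hj with hE | hlt
      · rw [hE]
      · have h1 := ih (by omega) j (by omega)
        have h2 := (hR j' (by omega)).1
        omega
  have hidxk : ∀ j, j ≤ t → idx j ≤ C.k' := by
    intro j hj
    have := hmono_idx t le_rfl j hj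
    omega
  have hidx_ge : ∀ j, j ≤ t → j ≤ idx j := by
    intro j
    induction j with
    | zero => omega
    | succ j ih =>
      intro hj
      have := ih (by omega)
      have := (hR j (by omega)).1
      omega
  have htk' : t ≤ C.k' := by
    have := hidx_ge t le_rfl
    omega
  have htk : t ≤ C.k := htk'.trans C.k'_le_k
  have hD1 : idx 1 = 1 := by
    have h01 := hR 0 (by omega)
    norm_num at h01
    rw [h0] at h01
    have hbt0 : C.bt 0 = 0 := by rw [Ctx.bt, if_pos rfl]
    rw [hbt0] at h01
    have hP0 : C.P (idx 1) = 0 := by omega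
    exact ((C.P_zero_iff (by omega) h01.2.1).mp hP0).1
  set y : ℕ → ℕ := fun j => if j = 0 then 0 else C.bt (idx (j - 1)) + 1 with hy
  have hy0 : y 0 = 0 := by simp [hy]
  have hyj : ∀ j, 1 ≤ j → y j = C.bt (idx (j - 1)) + 1 := by
    intro j hj
    simp only [hy]
    rw [if_neg (by omega)]
  have hy1 : y 1 = 1 := by
    rw [hyj 1 le_rfl]
    norm_num [h0]
    rw [Ctx.bt]
    norm_num
  have hbt_tm1 : C.bt (idx (t - 1)) = C.k - 1 := by
    have hfin := hR (t - 1) (by omega)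
    rw [show t - 1 + 1 = t by omega, hT] at hfin
    have hPk' : C.P C.k' = C.k - 1 := by rw [Ctx.P, if_pos rfl]
    rw [hPk'] at hfin
    have hup : C.bt (idx (t - 1)) < C.k := by
      have hlt : idx (t - 1) < C.k' := by
        have := hidxk (t - 1) (by omega)
        have := hneq (t - 1) (by omega)
        omega
      have := C.bt_strict hlt le_rfl
      rw [C.bt_last] at this
      exact this
    omega
  have hyt : y t = C.k := by
    rw [hyj t ht1, hbt_tm1]
    have := C.k1
    omega
  have hyt1 : y (t + 1) = C.k + 1 := by
    rw [hyj (t + 1) (by omega)]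
    rw [show t + 1 - 1 = t by omega, hT, C.bt_last]
  have hybound : ∀ j, 1 ≤ j → j + 1 ≤ t → y j ≤ C.k - 1 := by
    intro j hj1 hjt
    rw [hyj j hj1]
    have hs := hR (j - 1) (by omega)
    rw [show j - 1 + 1 = j by omega] at hs
    have h2 : idx j ≤ idx (t - 1) := hmono_idx (t - 1) (by omega) j (by omega)
    have hlt2 : idx (j - 1) < idx (t - 1) := by omega
    have := C.bt_strict hlt2 (hidxk (t - 1) (by omega))
    rw [hbt_tm1] at this
    omega
  -- the key chain step
  have hchain : ∀ j, j + 2 ≤ t + 1 → y j < C.k ∧ C.B (y j) + 1 = y (j + 2) := by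
    intro j hjt
    rcases Nat.eq_or_lt_of_le (Nat.zero_le j) with hj0 | hj1
    · -- j = 0
      rw [← hj0, hy0]
      have hk1 := C.k1
      refine ⟨by omega, ?_⟩
      have hB0 : C.B 0 = C.b (C.tau 0) := C.B_eq (by omega)
      have htau0 : C.tau 0 = 1 := by
        obtain ⟨h1, h2, h3, -⟩ := C.tau_spec 0
        by_contra hne
        have := C.a_two (j := C.tau 0) (by omega) h2
        omega
      rw [hB0, htau0, hyj 2 (by omega)]
      rw [show (2 : ℕ) - 1 = 1 by omega, hD1, Ctx.bt, if_neg (by omega)]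
    · -- j ≥ 1
      have hjt' : j + 1 ≤ t := by omega
      have hyjlt : y j < C.k := by
        have := hybound j (by omega) hjt'
        have := C.k1
        omega
      refine ⟨hyjlt, ?_⟩
      have hBj : C.B (y j) = C.b (C.tau (y j)) := C.B_eq hyjlt
      set A := idx (j + 1) with hA
      have hA1 : 1 ≤ A := by
        rw [hA]
        have := hmono_idx (j + 1) hjt' 1 (by omega)
        rw [hD1] at this
        omega
      have hAk : A ≤ C.k' := hidxk (j + 1) hjt'
      have hAgt : idx j < A := (hR j (by omega)).1
      have hidxj1 : 1 ≤ idx j := by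
        have := hmono_idx j (by omega) 1 (by omega)
        rw [hD1] at this
        omega
      have hA2 : 2 ≤ A := by omega
      have hyjval : y j = C.bt (idx (j - 1)) + 1 := hyj j (by omega)
      -- (i) a A ≤ y j + 1
      have hi : C.a A ≤ y j + 1 := by
        have hr : C.P (A - 1) ≤ C.bt (idx (j - 1)) := by
          rcases Nat.eq_or_lt_of_le (by omega : idx j ≤ A - 1) with hE | hgt
          · rw [← hE]
            have hs := hR (j - 1) (by omega)
            rw [show j - 1 + 1 = j by omega] at hs
            exact hs.2.2
          · by_cases hRe : Reaches C.a C.b C.k' (idx j) (A - 1)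
            · obtain ⟨l, hl, hRl⟩ := (hstep j (by omega)).2.2 (A - 1) (by omega) hRe
              have hc := (C.reaches_iff _ _).mp hRl
              have hmono2 := C.bt_mono (hmono_idx (j - 1) (by omega) l (by omega))
                (hidxk (j - 1) (by omega))
              omega
            · exfalso
              apply hRe
              rw [C.reaches_iff]
              refine ⟨hgt, by omega, ?_⟩
              have hPA := (hR j (by omega)).2.2
              rw [← hA] at hPA
              have hPs := C.P_strict (i := A - 1) (j := A) (by omega) (by omega) hAk
              omega
        have hPr : C.P (A - 1) = C.a A - 2 := by
          rw [Ctx.P, if_neg (by omega), show A - 1 + 1 = A by omega]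
        have ha2 : 2 ≤ C.a A := C.a_two hA2 hAk
        omega
      -- (ii) maximality
      have hii : ∀ r, 1 ≤ r → r ≤ C.k' → C.a r ≤ y j + 1 → r ≤ A := by
        intro r hr1 hrk har
        by_contra hcon
        push_neg at hcon
        have hAltk' : A < C.k' := by omega
        have hnR := (hstep j (by omega)).2.1 (j - 1) (by omega)
        rw [C.reaches_iff] at hnR
        push_neg at hnR
        rw [← hA] at hnR
        have hidxlt : idx (j - 1) < A := by
          have := hmono_idx j (by omega) (j - 1) (by omega)
          omega
        have hPA : C.bt (idx (j - 1)) < C.P A := by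
          have := hnR hidxlt hAk
          omega
        have hPA2 : C.P A = C.a (A + 1) - 2 := by
          rw [Ctx.P, if_neg (by omega)]
        have haA1 : C.a (A + 1) ≤ C.a r := C.a_mono (by omega) (by omega) hrk
        have := C.a_two (j := A + 1) (by omega) (by omega)
        omega
      have htauA : C.tau (y j) = A := by
        obtain ⟨h1, h2, h3, h4⟩ := C.tau_spec (y j)
        have hle1 : A ≤ C.tau (y j) := h4 A hA1 hAk hi
        have hle2 : C.tau (y j) ≤ A := hii _ h1 h2 h3
        omega
      rw [hBj, htauA, hyj (j + 2) (by omega)]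
      rw [show j + 2 - 1 = j + 1 by omega, ← hA, Ctx.bt, if_neg (by omega)]
  have hFstep : ∀ j, j + 2 ≤ t + 1 →
      Fhat C.k C.B (y j) = Fhat C.k C.B (y (j + 2)) := by
    intro j hj
    obtain ⟨hlt, hBeq⟩ := hchain j hj
    obtain ⟨hB1, hB2, -, -⟩ := C.B_spec hlt
    have := Fhat_step C.k C.B hlt (by omega) hB2
    rw [hBeq] at this
    exact this
  have hchase := chase_desc (Fhat C.k C.B) y t hFstep
  have hM0 : Mrec C.k C.B 0 = Fhat C.k C.B 0 - Fhat C.k C.B 1 :=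
    Mrec_eq_Fhat C.k C.B (Nat.zero_le _)
  have hFt : Fhat C.k C.B (y t) = 1 := by rw [hyt]; exact Fhat_k C.k C.B
  have hFt1 : Fhat C.k C.B (y (t + 1)) = 0 := by rw [hyt1]; exact Fhat_top C.k C.B
  have hcontrib := C.contrib_eq_Mrec amb 0 (Nat.zero_le _)
  have hgoal : contrib S T ((Finset.Icc 1 C.k).image C.v)
      = (-1 : ℤ) ^ C.k * Mrec C.k C.B 0 := by
    rw [show (1 : ℕ) = 0 + 1 by omega]
    rw [hcontrib]
    norm_num
  rcases Nat.even_or_odd t with ⟨d, hd⟩ | ⟨d, hd⟩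
  · -- t even
    have hF0 : Fhat C.k C.B (y 0) = 1 := by
      have := hchase d 0 (by omega)
      rw [show 0 + 2 * d = t by omega] at this
      rw [this, hFt]
    have hF1 : Fhat C.k C.B (y 1) = 0 := by
      have := hchase d 1 (by omega)
      rw [show 1 + 2 * d = t + 1 by omega] at this
      rw [this, hFt1]
    rw [hy0] at hF0
    rw [hy1] at hF1
    have hM : Mrec C.k C.B 0 = 1 := by rw [hM0, hF0, hF1]; ring
    rw [hgoal, hM, mul_one]
    have h1 : ((-1 : ℤ)) ^ (C.k - t) * (-1) ^ t = (-1) ^ C.k := by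
      rw [← pow_add, show C.k - t + t = C.k by omega]
    have h2 : ((-1 : ℤ)) ^ t = 1 := Even.neg_one_pow ⟨d, hd⟩
    rw [h2, mul_one] at h1
    rw [h1]
  · -- t odd
    have hF1 : Fhat C.k C.B (y 1) = 1 := by
      have := hchase d 1 (by omega)
      rw [show 1 + 2 * d = t by omega] at this
      rw [this, hFt]
    have hF0 : Fhat C.k C.B (y 0) = 0 := by
      have := hchase (d + 1) 0 (by omega)
      rw [show 0 + 2 * (d + 1) = t + 1 by omega] at this
      rw [this, hFt1]
    rw [hy0] at hF0
    rw [hy1] at hF1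
    have hM : Mrec C.k C.B 0 = -1 := by rw [hM0, hF0, hF1]; ring
    rw [hgoal, hM]
    have h1 : ((-1 : ℤ)) ^ (C.k - t) * (-1) ^ t = (-1) ^ C.k := by
      rw [← pow_add, show C.k - t + t = C.k by omega]
    have h2 : ((-1 : ℤ)) ^ t = -1 := Odd.neg_one_pow ⟨d, hd⟩
    rw [h2] at h1
    have : ((-1 : ℤ)) ^ (C.k - t) = -(-1) ^ C.k := by
      have := h1
      ring_nf at this ⊢
      linarith
    rw [this]
    ring

end S3

namespace S3

variable {n m : ℕ} {S : Fin n → Fin n → Finset ℤ} {T : PlaneTree n m}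

/-- Interleaved two-chain iteration. -/
def iter2 (phi : ℕ → ℕ) : ℕ → ℕ
  | 0 => 0
  | 1 => 1
  | (j + 2) => phi (iter2 phi j)

lemma Ctx.B_mono' (C : Ctx S T) {c c' : ℕ} (h : c ≤ c') (h2 : c' < C.k) :
    C.B c ≤ C.B c' := by
  induction c' with
  | zero => rw [show c = 0 by omega]
  | succ c' ih =>
    rcases Nat.eq_or_lt_of_le h with hE | hlt
    · rw [hE]
    · exact le_trans (ih (by omega) (by omega)) (C.B_mono h2)

lemma Ctx.b_reflect (C : Ctx S T) {r r' : ℕ} (hr1 : 1 ≤ r) (hr'1 : 1 ≤ r')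
    (hrk : r ≤ C.k') (hr'k : r' ≤ C.k') (h : C.b r < C.b r') : r < r' := by
  by_contra hcon
  push_neg at hcon
  have := C.b_mono hr'1 hcon hrk
  omega

lemma Ctx.tau_zero (C : Ctx S T) : C.tau 0 = 1 := by
  obtain ⟨h1, h2, h3, -⟩ := C.tau_spec 0
  by_contra hne
  have := C.a_two (j := C.tau 0) (by omega) h2
  omega

lemma Ctx.b_one_pos (C : Ctx S T) : 1 ≤ C.b 1 := by
  obtain ⟨h1, h2, -, -⟩ := C.hboxes 1 le_rfl C.hk'
  omega

/-- If `k = 1` the algorithm always succeeds. -/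
lemma Ctx.k_one_run (C : Ctx S T) (hk1 : C.k = 1) :
    AlgRun C.a C.b C.k' 1 (fun j => min j 1) := by
  have hk'1 : C.k' = 1 := by
    have := C.k'_le_k
    have := C.hk'
    omega
  refine ⟨rfl, by simp [hk'1], ?_, ?_⟩
  · intro j hj
    rw [show j = 0 by omega]
    simp [hk'1]
  · intro j hj
    rw [show j = 0 by omega]
    refine ⟨?_, ?_, ?_⟩
    · show Reaches C.a C.b C.k' (min 0 1) (min 1 1)
      simp only [Nat.zero_min, Nat.min_self]
      rw [C.reaches_iff]
      refine ⟨by omega, by omega, ?_⟩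
      rw [Ctx.P, if_pos hk'1.symm, Ctx.bt, if_pos rfl]
      omega
    · intro l hl
      omega
    · intro r hr
      simp only [Nat.min_self] at hr
      intro hRe
      rw [C.reaches_iff] at hRe
      simp only [Nat.zero_min] at hRe
      omega

end S3

namespace S3

variable {n m : ℕ} {S : Fin n → Fin n → Finset ℤ} {T : PlaneTree n m}

lemma Ctx.failure (C : Ctx S T) (amb : Amb T C.k C.v)
    (hno : ¬ ∃ t idx, AlgRun C.a C.b C.k' t idx) :
    contrib S T ((Finset.Icc 1 C.k).image C.v) = 0 := by
  have hk1 := C.k1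
  rcases Nat.eq_or_lt_of_le hk1 with hkE | hk2
  · exact absurd ⟨1, fun j => min j 1, C.k_one_run hkE.symm⟩ hno
  set phiF := fun c => if c < C.k then C.B c + 1 else c + 2 with hphi
  set y := iter2 phiF with hy
  have hy0 : y 0 = 0 := rfl
  have hy1 : y 1 = 1 := rfl
  have hystep : ∀ j, y (j + 2) = phiF (y j) := fun j => rfl
  have hphi_lt : ∀ c, c < C.k → phiF c = C.B c + 1 := by
    intro c h
    simp only [hphi]
    rw [if_pos h]
  have hgrow : ∀ j, y j + 2 ≤ y (j + 2) := by
    intro j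
    rw [hystep]
    simp only [hphi]
    split_ifs with h
    · have := (C.B_spec h).1
      omega
    · omega
  have hje : ∀ j, j ≤ y j := by
    intro j
    induction j using Nat.strong_induction_on with
    | _ j ih =>
      match j with
      | 0 => omega
      | 1 => omega
      | (j + 2) =>
        have h1 := ih j (by omega)
        have h2 := hgrow j
        omega
  have hex : ∃ j, C.k ≤ y j := ⟨C.k, hje C.k⟩
  set s := Nat.find hex with hs
  have hsk : C.k ≤ y s := Nat.find_spec hex
  have hsmin : ∀ j, j < s → y j < C.k := by
    intro j hj
    have := Nat.find_min hex hj
    omega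
  have hs2 : 2 ≤ s := by
    by_contra h
    push_neg at h
    interval_cases s
    · rw [hy0] at hsk; omega
    · rw [hy1] at hsk; omega
  have hFstep : ∀ j, j + 2 ≤ s + 1 → Fhat C.k C.B (y j) = Fhat C.k C.B (y (j + 2)) := by
    intro j hj
    have hylt : y j < C.k := hsmin j (by omega)
    have h2 := C.B_spec hylt
    have hF := Fhat_step C.k C.B hylt (by omega) h2.2.1
    rw [hystep j, hphi_lt _ hylt]
    exact hF
  have hM0 : Mrec C.k C.B 0 = Fhat C.k C.B 0 - Fhat C.k C.B 1 :=
    Mrec_eq_Fhat _ _ (Nat.zero_le _)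
  have hgoal : contrib S T ((Finset.Icc 1 C.k).image C.v)
      = (-1 : ℤ) ^ C.k * Mrec C.k C.B 0 := by
    have hcontrib := C.contrib_eq_Mrec amb 0 (Nat.zero_le _)
    rw [show (1 : ℕ) = 0 + 1 by omega, hcontrib]
    norm_num
  suffices hM : Mrec C.k C.B 0 = 0 by rw [hgoal, hM, mul_zero]
  by_cases hstrict : ∀ j, j ≤ s → y j < y (j + 1)
  swap
  · -- a merge happens
    push_neg at hstrict
    obtain ⟨j0, hj0s, hj0⟩ := hstrict
    have hexm : ∃ j, j ≤ s ∧ y (j + 1) ≤ y j := ⟨j0, hj0s, hj0⟩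
    set m0 := Nat.find hexm with hm0def
    obtain ⟨hm0s, hm0⟩ : m0 ≤ s ∧ y (m0 + 1) ≤ y m0 := Nat.find_spec hexm
    have hm0min : ∀ j, j < m0 → y j < y (j + 1) := by
      intro j hj
      have h := Nat.find_min hexm hj
      push_neg at h
      exact h (by omega)
    have hy2B : y 2 = C.B 0 + 1 := by
      rw [hystep 0, hy0, hphi_lt 0 (by omega)]
    have hm02 : 2 ≤ m0 := by
      by_contra h
      push_neg at h
      interval_cases m0
      · rw [hy0, hy1] at hm0; omega
      · have := (C.B_spec (show 0 < C.k by omega)).1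
        rw [hy1] at hm0
        rw [hy2B] at hm0
        omega
    have hA : y (m0 + 1) = C.B (y (m0 - 1)) + 1 := by
      have h := hystep (m0 - 1)
      rw [show m0 - 1 + 2 = m0 + 1 by omega] at h
      rw [h, hphi_lt _ (hsmin _ (by omega))]
    have hB' : y m0 = C.B (y (m0 - 2)) + 1 := by
      have h := hystep (m0 - 2)
      rw [show m0 - 2 + 2 = m0 by omega] at h
      rw [h, hphi_lt _ (hsmin _ (by omega))]
    have hmlt : y (m0 - 2) < y (m0 - 1) := by
      have := hm0min (m0 - 2) (by omega)
      rw [show m0 - 2 + 1 = m0 - 1 by omega] at this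
      exact this
    have hmono2 : C.B (y (m0 - 2)) ≤ C.B (y (m0 - 1)) :=
      C.B_mono' (by omega) (hsmin _ (by omega))
    have hEq : y (m0 + 1) = y m0 := by omega
    have hchase := chase_desc (Fhat C.k C.B) y m0 (fun j hj => hFstep j (by omega))
    have hF01 : Fhat C.k C.B (y 0) = Fhat C.k C.B (y 1) := by
      rcases Nat.even_or_odd m0 with ⟨d, hd⟩ | ⟨d, hd⟩
      · have e0 := hchase d 0 (by omega)
        have e1 := hchase d 1 (by omega)
        rw [show 0 + 2 * d = m0 by omega] at e0
        rw [show 1 + 2 * d = m0 + 1 by omega] at e1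
        rw [e0, e1, hEq]
      · have e0 := hchase (d + 1) 0 (by omega)
        have e1 := hchase d 1 (by omega)
        rw [show 0 + 2 * (d + 1) = m0 + 1 by omega] at e0
        rw [show 1 + 2 * d = m0 by omega] at e1
        rw [e0, e1, hEq]
    rw [hy0, hy1] at hF01
    omega
  · -- strictly increasing up to s + 1
    have hymono : ∀ p q, p ≤ q → q ≤ s + 1 → y p ≤ y q := by
      intro p q hpq hq
      induction q with
      | zero => rw [show p = 0 by omega]
      | succ q ih =>
        rcases Nat.eq_or_lt_of_le hpq with hE | hlt
        · rw [hE]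
        · have h1 := ih (by omega) (by omega)
          have h2 := hstrict q (by omega)
          omega
    have hysub : y s = phiF (y (s - 2)) := by
      have h := hystep (s - 2)
      rw [show s - 2 + 2 = s by omega] at h
      exact h
    have hysk1 : y s ≤ C.k + 1 := by
      rw [hysub, hphi_lt _ (hsmin _ (by omega))]
      have := (C.B_spec (hsmin (s - 2) (by omega))).2.1
      omega
    have hys1sub : y (s + 1) = C.B (y (s - 1)) + 1 := by
      have h := hystep (s - 1)
      rw [show s - 1 + 2 = s + 1 by omega] at h
      rw [h, hphi_lt _ (hsmin _ (by omega))]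
    rcases (show y s = C.k ∨ y s = C.k + 1 by omega) with hcase | hcase
    · -- success configuration: build a run, contradiction
      exfalso
      set idxf : ℕ → ℕ := fun j => if j = 0 then 0 else C.tau (y (j - 1)) with hidxf
      have f0 : idxf 0 = 0 := rfl
      have fj : ∀ j, 1 ≤ j → idxf j = C.tau (y (j - 1)) := by
        intro j hj
        simp only [hidxf]
        rw [if_neg (by omega)]
      have ftk : ∀ j, 1 ≤ j → 1 ≤ idxf j ∧ idxf j ≤ C.k' := by
        intro j hj
        rw [fj j hj]
        obtain ⟨h1, h2, -, -⟩ := C.tau_spec (y (j - 1))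
        exact ⟨h1, h2⟩
      have hyb : ∀ j, 1 ≤ j → j ≤ s → y (j + 1) = C.b (idxf j) + 1 := by
        intro j h1 h2
        rw [fj j h1]
        have h := hystep (j - 1)
        rw [show j - 1 + 2 = j + 1 by omega] at h
        rw [h, hphi_lt _ (hsmin _ (by omega)), C.B_eq (hsmin _ (by omega))]
      have hys1 : y (s + 1) = C.k + 1 := by
        have hlt := hstrict s le_rfl
        rw [hys1sub]
        rw [hys1sub] at hlt
        have := (C.B_spec (hsmin (s - 1) (by omega))).2.1
        omega
      have fidx_s : idxf s = C.k' := by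
        have h := hyb s (by omega) le_rfl
        rw [hys1] at h
        have hbk : C.b (idxf s) = C.k := by omega
        obtain ⟨h1, h2⟩ := ftk s (by omega)
        by_contra hne
        have := C.hmono _ _ h1 (lt_of_le_of_ne h2 hne) le_rfl
        rw [C.b_last] at this
        omega
      have fb : ∀ j, 1 ≤ j → j ≤ s → C.b (idxf j) = y (j + 1) - 1 := by
        intro j h1 h2
        have := hyb j h1 h2
        omega
      have fne : ∀ j, j < s → idxf j ≠ C.k' := by
        intro j hj
        rcases Nat.eq_or_lt_of_le (Nat.zero_le j) with hj0 | hj1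
        · rw [← hj0, f0]
          have := C.hk'
          omega
        · have hb := fb j (by omega) (by omega)
          have hyles : y (j + 1) ≤ y s := hymono (j + 1) s (by omega) (by omega)
          intro hcon
          rw [hcon, C.b_last] at hb
          omega
      have fidx1 : idxf 1 = 1 := by
        rw [fj 1 le_rfl]
        show C.tau (y 0) = 1
        rw [hy0]
        exact C.tau_zero
      have fk'2 : 2 ≤ C.k' := by
        by_contra h
        push_neg at h
        have h1 : C.k' = 1 := by have := C.hk'; omega
        have := fne 1 (by omega)
        rw [fidx1, h1] at this
        exact this rfl
      have fa2 : C.a 2 = 2 := by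
        by_contra hne
        have ha2 : 2 ≤ C.a 2 := C.a_two le_rfl fk'2
        have ha3 : 3 ≤ C.a 2 := by omega
        have htau1 : C.tau 1 = 1 := by
          obtain ⟨h1, h2, h3, -⟩ := C.tau_spec 1
          by_contra hne'
          have := C.a_mono (r := 2) (s := C.tau 1) (by omega) (by omega) h2
          omega
        have hy3 : y 3 = C.b 1 + 1 := by
          have h := hystep 1
          rw [h, hy1, hphi_lt _ (by omega), C.B_eq (by omega), htau1]
        have hy2 : y 2 = C.b 1 + 1 := by
          rw [hystep 0, hy0, hphi_lt _ (by omega), C.B_eq (by omega), C.tau_zero]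
        have := hstrict 2 hs2
        rw [hy2, hy3] at this
        omega
      have fP1 : C.P 1 = 0 := by
        rw [Ctx.P, if_neg (by omega), fa2]
      have fmono : ∀ j, j < s → idxf j < idxf (j + 1) := by
        intro j hj
        rcases Nat.eq_or_lt_of_le (Nat.zero_le j) with hj0 | hj1
        · rw [← hj0, f0]
          show 0 < idxf 1
          rw [fidx1]
          omega
        · have hb1 := fb j (by omega) (by omega)
          have hb2 := fb (j + 1) (by omega) (by omega)
          have hst := hstrict (j + 1) (by omega)
          obtain ⟨hj1', hjk'⟩ := ftk j (by omega)
          obtain ⟨hj1'', hjk''⟩ := ftk (j + 1) (by omega)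
          apply C.b_reflect hj1' hj1'' hjk' hjk''
          have hy1le : 1 ≤ y (j + 1) := by
            have := hymono 1 (j + 1) (by omega) (by omega)
            rw [hy1] at this
            omega
          omega
      have fPge : ∀ j, 1 ≤ j → j < s → y j ≤ C.P (idxf (j + 1)) := by
        intro j h1 h2
        have hA := fj (j + 1) (by omega)
        rw [show j + 1 - 1 = j by omega] at hA
        obtain ⟨ht1, ht2, ht3, ht4⟩ := C.tau_spec (y j)
        rcases Nat.eq_or_lt_of_le ((ftk (j + 1) (by omega)).2) with hE | hlt
        · rw [Ctx.P, if_pos hE]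
          have := hsmin j h2
          omega
        · rw [Ctx.P, if_neg (by omega)]
          have hmax : ¬ (C.a (idxf (j + 1) + 1) ≤ y j + 1) := by
            intro hcon
            have := ht4 (idxf (j + 1) + 1) (by omega) (by omega) hcon
            rw [hA] at this
            omega
          push_neg at hmax
          omega
      have fPle : ∀ j, 1 ≤ j → j < s → C.P (idxf (j + 1)) ≤ C.bt (idxf j) := by
        intro j h1 h2
        have hbtj : C.bt (idxf j) = y (j + 1) - 1 := by
          rw [Ctx.bt, if_neg (by have := (ftk j h1).1; omega)]
          exact fb j h1 (by omega)
        rcases Nat.eq_or_lt_of_le ((ftk (j + 1) (by omega)).2) with hE | hlt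
        · -- idxf (j+1) = k' forces j + 1 = s
          have hj1s : j + 1 = s := by
            by_contra hne
            exact fne (j + 1) (by omega) hE
          rw [Ctx.P, if_pos hE, hbtj, hj1s, hcase]
        · have hA := fj (j + 1) (by omega)
          rw [show j + 1 - 1 = j by omega] at hA
          have hj1s : j + 1 < s := by
            by_contra hne
            have : j + 1 = s := by omega
            rw [this] at hlt
            rw [fidx_s] at hlt
            omega
          rw [Ctx.P, if_neg (by omega), hbtj]
          -- show a (idxf (j+1) + 1) ≤ y (j+1) + 1
          by_contra hcon
          push_neg at hcon
          have hacon : y (j + 1) + 1 < C.a (idxf (j + 1) + 1) := by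
            have ha2' : 2 ≤ C.a (idxf (j + 1) + 1) :=
              C.a_two (by have := (ftk (j + 1) (by omega)).1; omega) (by omega)
            omega
          have htaueq : C.tau (y (j + 1)) = C.tau (y j) := by
            obtain ⟨g1, g2, g3, g4⟩ := C.tau_spec (y (j + 1))
            have hge : C.tau (y j) ≤ C.tau (y (j + 1)) :=
              C.tau_mono (hymono j (j + 1) (by omega) (by omega))
            rcases Nat.eq_or_lt_of_le hge with hE2 | hlt2
            · omega
            · exfalso
              have := C.a_mono (r := C.tau (y j) + 1) (s := C.tau (y (j + 1)))
                (by omega) (by omega) g2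
              rw [← hA] at this
              omega
          have hy3eq : y (j + 3) = y (j + 2) := by
            have e1 : y (j + 3) = C.B (y (j + 1)) + 1 := by
              have h := hystep (j + 1)
              rw [show j + 1 + 2 = j + 3 by omega] at h
              rw [h, hphi_lt _ (hsmin _ (by omega))]
            have e2 : y (j + 2) = C.B (y j) + 1 := by
              rw [hystep j, hphi_lt _ (hsmin _ (by omega))]
            rw [e1, e2, C.B_eq (hsmin _ (by omega)), C.B_eq (hsmin _ (by omega)), htaueq]
          have hc2 := hstrict (j + 2) (by omega)
          rw [show j + 2 + 1 = j + 3 by omega] at hc2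
          omega
      apply hno
      refine ⟨s, idxf, f0, fidx_s, fne, ?_⟩
      intro j hj
      refine ⟨?_, ?_, ?_⟩
      · rw [C.reaches_iff]
        refine ⟨fmono j hj, (ftk (j + 1) (by omega)).2, ?_⟩
        rcases Nat.eq_or_lt_of_le (Nat.zero_le j) with hj0 | hj1
        · rw [← hj0]
          show C.P (idxf 1) ≤ C.bt (idxf 0)
          rw [fidx1, f0, fP1, Ctx.bt, if_pos rfl]
        · exact fPle j (by omega) hj
      · intro l hl hRe
        rw [C.reaches_iff] at hRe
        obtain ⟨e1, e2, e3⟩ := hRe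
        have hj1 : 1 ≤ j := by omega
        have hPge := fPge j hj1 hj
        have hbtl : C.bt (idxf l) ≤ y j - 1 := by
          rcases Nat.eq_or_lt_of_le (Nat.zero_le l) with hl0 | hl1
          · rw [← hl0, f0, Ctx.bt, if_pos rfl]
            have := hymono 1 j (by omega) (by omega)
            rw [hy1] at this
            omega
          · rw [Ctx.bt, if_neg (by have := (ftk l (by omega)).1; omega)]
            have := fb l (by omega) (by omega)
            have := hymono (l + 1) j (by omega) (by omega)
            omega
        have hyj1 : 1 ≤ y j := by
          have := hymono 1 j (by omega) (by omega)
          rw [hy1] at this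
          omega
        omega
      · intro r hr hRe
        rw [C.reaches_iff] at hRe
        obtain ⟨e1, e2, e3⟩ := hRe
        have hj1 : 1 ≤ j := by
          by_contra h
          have hj0 : j = 0 := by omega
          rw [hj0, f0] at e1
          rw [hj0] at hr
          rw [fidx1] at hr
          omega
        refine ⟨j - 1, by omega, ?_⟩
        rw [C.reaches_iff]
        have hmj : idxf (j - 1) < idxf j := by
          have := fmono (j - 1) (by omega)
          rw [show j - 1 + 1 = j by omega] at this
          exact this
        refine ⟨by omega, e2, ?_⟩
        have hbtj : C.bt (idxf (j - 1)) = y j - 1 := by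
          rcases Nat.eq_or_lt_of_le (show 1 ≤ j from hj1) with hE | hlt
          · rw [← hE]
            show C.bt (idxf 0) = y 1 - 1
            rw [f0, hy1, Ctx.bt, if_pos rfl]
          · rw [Ctx.bt, if_neg (by have := (ftk (j - 1) (by omega)).1; omega)]
            have := fb (j - 1) (by omega) (by omega)
            rw [show j - 1 + 1 = j by omega] at this
            omega
        rw [hbtj]
        have hA := fj (j + 1) (by omega)
        rw [show j + 1 - 1 = j by omega] at hA
        obtain ⟨ht1, ht2, ht3, -⟩ := C.tau_spec (y j)
        have hrk' : r < C.k' := by omega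
        rw [Ctx.P, if_neg (by omega)]
        have har : C.a (r + 1) ≤ C.a (C.tau (y j)) := C.a_mono (by omega) (by rw [← hA]; omega) ht2
        have ha2 : 2 ≤ C.a (r + 1) := C.a_two (by omega) (by omega)
        have hyj1 : 1 ≤ y j := by
          have := hymono 1 j (by omega) (by omega)
          rw [hy1] at this
          omega
        omega
    · -- y s = k + 1 : both chains miss
      have htks : C.tau (y (s - 2)) = C.k' := by
        have h2 : C.B (y (s - 2)) = C.k := by
          rw [hysub, hphi_lt _ (hsmin _ (by omega))] at hcase
          omega
        rw [C.B_eq (hsmin _ (by omega))] at h2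
        obtain ⟨t1, t2, -, -⟩ := C.tau_spec (y (s - 2))
        by_contra hne
        have := C.hmono _ _ t1 (lt_of_le_of_ne t2 hne) le_rfl
        rw [C.b_last] at this
        omega
      have htks1 : C.tau (y (s - 1)) = C.k' := by
        have hge : C.tau (y (s - 2)) ≤ C.tau (y (s - 1)) :=
          C.tau_mono (hymono (s - 2) (s - 1) (by omega) (by omega))
        obtain ⟨-, t2, -, -⟩ := C.tau_spec (y (s - 1))
        omega
      have hys1 : y (s + 1) = C.k + 1 := by
        rw [hys1sub, C.B_eq (hsmin _ (by omega)), htks1, C.b_last]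
      have hFs : Fhat C.k C.B (y s) = 0 := by rw [hcase]; exact Fhat_top C.k C.B
      have hFs1 : Fhat C.k C.B (y (s + 1)) = 0 := by rw [hys1]; exact Fhat_top C.k C.B
      have hchase := chase_desc (Fhat C.k C.B) y s hFstep
      have hF01 : Fhat C.k C.B (y 0) = Fhat C.k C.B (y 1) := by
        rcases Nat.even_or_odd s with ⟨d, hd⟩ | ⟨d, hd⟩
        · have e0 := hchase d 0 (by omega)
          have e1 := hchase d 1 (by omega)
          rw [show 0 + 2 * d = s by omega] at e0
          rw [show 1 + 2 * d = s + 1 by omega] at e1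
          rw [e0, e1, hFs, hFs1]
        · have e0 := hchase (d + 1) 0 (by omega)
          have e1 := hchase d 1 (by omega)
          rw [show 0 + 2 * (d + 1) = s + 1 by omega] at e0
          rw [show 1 + 2 * d = s by omega] at e1
          rw [e0, e1, hFs, hFs1]
      rw [hy0, hy1] at hF01
      omega

end S3

/-- Theorem 3.13: for an `S`-connected cadet sequence `(v 1, …, v k)`
with maximal `S`-cadet sequences the windows `[a r, b r]` (`1 ≤ r ≤ k'`, in increasing
order of last index), if the algorithm succeeds with `t` steps then the contribution is
`(-1)^(k - t)`, and if it fails then the contribution is `0`. -/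
theorem statement_3 {n : ℕ} (S : Fin n → Fin n → Finset ℤ) (T : PlaneTree n (mOf S))
    (k : ℕ) (v : ℕ → Fin n)
    (hcad : IsCadetWindow T v 1 k) (hinj : WindowInj v 1 k)
    (hconn : SConnected S T ((Finset.Icc 1 k).image v))
    (k' : ℕ) (hk' : 1 ≤ k') (a b : ℕ → ℕ)
    (hboxes : ∀ r, 1 ≤ r → r ≤ k' → 1 ≤ a r ∧ a r ≤ b r ∧ b r ≤ k ∧
      IsMaxSCadetSet S T ((Finset.Icc (a r) (b r)).image v))
    (hmono : ∀ r s, 1 ≤ r → r < s → s ≤ k' → b r < b s)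
    (hall : ∀ Z, IsMaxSCadetSet S T Z → Z ⊆ (Finset.Icc 1 k).image v →
      ∃ r, 1 ≤ r ∧ r ≤ k' ∧ Z = (Finset.Icc (a r) (b r)).image v) :
    (∀ t idx, AlgRun a b k' t idx →
      contrib S T ((Finset.Icc 1 k).image v) = (-1) ^ (k - t)) ∧
    ((¬ ∃ t idx, AlgRun a b k' t idx) → contrib S T ((Finset.Icc 1 k).image v) = 0) := by
  classical
  let C : S3.Ctx S T := ⟨k, v, hcad, hinj, hconn, k', hk', a, b, hboxes, hmono, hall⟩
  obtain ⟨amb⟩ := C.amb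
  constructor
  · intro t idx hrun
    exact C.success amb hrun
  · intro hno
    exact C.failure amb hno
end

section
/- Let T ∈ T^(m)(n) have nonzero contribution, i.e. r_S(T) ≠ 0. Then every maximal S-cadet sequence of T of size greater than 1 intersects some other maximal S-cadet sequence of T. -/
open scoped Classical

section StatementFourAux

open Finset

variable {n m : ℕ} {S : Fin n → Fin n → Finset ℤ} {T : PlaneTree n m}

lemma cadet_unique {u x y : Fin n} (hx : T.IsCadet u x) (hy : T.IsCadet u y) : x = y :=
  T.pos_inj x y hx.1.1 hy.1.1 (hx.1.2.trans hy.1.2.symm)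
    (le_antisymm (hy.2 x hx.1) (hx.2 y hy.1))

lemma cocadet_unique {u u' x : Fin n} (hx : T.IsCadet u x) (hy : T.IsCadet u' x) : u = u' :=
  hx.1.2.symm.trans hy.1.2

lemma align {k l q r : ℕ} {v w : ℕ → Fin n} (hmax : IsMaxCadetSeq T k v)
    (hw : IsCadetWindow T w 1 l) (hr : 1 ≤ r) (hrl : r ≤ l) (hq : 1 ≤ q) (hqk : q ≤ k)
    (heq : w r = v q) :
    r ≤ q ∧ q + l ≤ k + r ∧ ∀ p, 1 ≤ p → p ≤ l → w p = v (p + q - r) := by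
  obtain ⟨hv, hleaf, hroot⟩ := hmax
  have hB : ∀ j, j < r → (j + 1 ≤ q ∧ w (r - j) = v (q - j)) := by
    intro j
    induction j with
    | zero => intro _; simpa using ⟨hq, heq⟩
    | succ j ih =>
      intro hj
      obtain ⟨hjq, hwj⟩ := ih (by omega)
      have hcad : T.IsCadet (w (r - j - 1)) (w (r - j)) := hw.2.2 (r - j) (by omega) (by omega)
      rw [hwj] at hcad
      have hq2 : q - j ≠ 1 := fun h1 => hroot _ (h1 ▸ hcad)
      have hcad' : T.IsCadet (v (q - j - 1)) (v (q - j)) := by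
        have := hv.2.2 (q - j) (by omega) (by omega)
        exact this
      have := cocadet_unique hcad hcad'
      refine ⟨by omega, ?_⟩
      have e1 : r - (j + 1) = r - j - 1 := by omega
      have e2 : q - (j + 1) = q - j - 1 := by omega
      rw [e1, e2, this]
  have hF : ∀ j, r + j ≤ l → (q + j ≤ k ∧ w (r + j) = v (q + j)) := by
    intro j
    induction j with
    | zero => intro _; simpa using ⟨hqk, heq⟩
    | succ j ih =>
      intro hj
      obtain ⟨hjk, hwj⟩ := ih (by omega)
      have hcad : T.IsCadet (w (r + j)) (w (r + j + 1)) := by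
        have := hw.2.2 (r + j + 1) (by omega) (by omega)
        simpa using this
      rw [hwj] at hcad
      have hne : q + j ≠ k := by
        intro h
        exact hleaf (w (r + j + 1)) (h ▸ hcad.1)
      have hcad' : T.IsCadet (v (q + j)) (v (q + j + 1)) := by
        have := hv.2.2 (q + j + 1) (by omega) (by omega)
        simpa using this
      have := cadet_unique hcad hcad'
      refine ⟨by omega, ?_⟩
      have e1 : r + (j + 1) = r + j + 1 := by omega
      have e2 : q + (j + 1) = q + j + 1 := by omega
      rw [e1, e2, this]
  have hrq : r ≤ q := by
    have := (hB (r - 1) (by omega)).1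
    omega
  have hlk : q + l ≤ k + r := by
    have := (hF (l - r) (by omega)).1
    omega
  refine ⟨hrq, hlk, fun p hp1 hpl => ?_⟩
  rcases le_or_gt p r with hpr | hpr
  · have := (hB (r - p) (by omega)).2
    have e1 : r - (r - p) = p := by omega
    have e2 : q - (r - p) = p + q - r := by omega
    rwa [e1, e2] at this
  · have := (hF (p - r) (by omega)).2
    have e1 : r + (p - r) = p := by omega
    have e2 : q + (p - r) = p + q - r := by omega
    rwa [e1, e2] at this

lemma window_congr {v v' : ℕ → Fin n} {a b : ℕ} (h : ∀ p, a ≤ p → p ≤ b → v p = v' p)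
    (hw : IsSCadetWindow S T v a b) : IsSCadetWindow S T v' a b := by
  obtain ⟨⟨h1, h2, h3⟩, h4⟩ := hw
  refine ⟨⟨h1, h2, fun p hp1 hp2 => ?_⟩, fun i j hi hij hj => ?_⟩
  · rw [← h (p - 1) (by omega) (by omega), ← h p (by omega) hp2]
    exact h3 p hp1 hp2
  · have := h4 i j hi hij hj
    have hs : ∑ p ∈ Finset.Icc (i + 1) j, T.lsib (v' p) =
        ∑ p ∈ Finset.Icc (i + 1) j, T.lsib (v p) := by
      refine Finset.sum_congr rfl fun p hp => ?_
      rw [Finset.mem_Icc] at hp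
      rw [h p (by omega) (by omega)]
    rw [hs, ← h i hi (by omega), ← h j (by omega) hj]
    exact this

lemma sum_shift (f : ℕ → ℕ) (a b t : ℕ) :
    ∑ p ∈ Finset.Icc (a + t) (b + t), f p = ∑ p ∈ Finset.Icc a b, f (p + t) := by
  rw [← Finset.image_add_right_Icc, Finset.sum_image (by intro x _ y _ h; simp only at h; omega)]

lemma scadet_unshift {v : ℕ → Fin n} {t c d : ℕ}
    (h : IsSCadetWindow S T (fun p => v (p + t)) c d) :
    IsSCadetWindow S T v (c + t) (d + t) := by
  obtain ⟨⟨h1, h2, h3⟩, h4⟩ := h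
  refine ⟨⟨by omega, by omega, fun p hp1 hp2 => ?_⟩, fun i j hi hij hj => ?_⟩
  · have := h3 (p - t) (by omega) (by omega)
    have e1 : p - t - 1 + t = p - 1 := by omega
    have e2 : p - t + t = p := by omega
    simpa only [e1, e2] using this
  · have := h4 (i - t) (j - t) (by omega) (by omega) (by omega)
    have e1 : i - t + t = i := by omega
    have e2 : j - t + t = j := by omega
    have hs : ∑ p ∈ Finset.Icc (i + 1) j, T.lsib (v p) =
        ∑ p ∈ Finset.Icc (i - t + 1) (j - t), T.lsib (v (p + t)) := by
      have e5 : Finset.Icc (i + 1) j = Finset.Icc ((i - t + 1) + t) ((j - t) + t) := by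
        congr 1 <;> omega
      rw [e5, sum_shift]
    rw [hs]
    simpa only [e1, e2] using this

lemma scadet_shift {v : ℕ → Fin n} {t c d : ℕ} (hc : t + 1 ≤ c)
    (h : IsSCadetWindow S T v c d) :
    IsSCadetWindow S T (fun p => v (p + t)) (c - t) (d - t) := by
  obtain ⟨⟨h1, h2, h3⟩, h4⟩ := h
  refine ⟨⟨by omega, by omega, fun p hp1 hp2 => ?_⟩, fun i j hi hij hj => ?_⟩
  · have := h3 (p + t) (by omega) (by omega)
    have e1 : p + t - 1 = p - 1 + t := by omega
    simp only [e1] at this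
    exact this
  · have := h4 (i + t) (j + t) (by omega) (by omega) (by omega)
    have hs : ∑ p ∈ Finset.Icc (i + 1) j, T.lsib ((fun p => v (p + t)) p) =
        ∑ p ∈ Finset.Icc (i + t + 1) (j + t), T.lsib (v p) := by
      have e3 : i + t + 1 = (i + 1) + t := by omega
      rw [e3, sum_shift]
    rw [hs]
    exact this

end StatementFourAux
section StatementFourAux2

open Finset

variable {n m : ℕ} {S : Fin n → Fin n → Finset ℤ} {T : PlaneTree n m}

lemma subwindow {v : ℕ → Fin n} {a b c d : ℕ} (h : IsSCadetWindow S T v a b)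
    (hac : a ≤ c) (hcd : c ≤ d) (hdb : d ≤ b) : IsSCadetWindow S T v c d := by
  obtain ⟨⟨h1, h2, h3⟩, h4⟩ := h
  exact ⟨⟨by omega, hcd, fun p hp1 hp2 => h3 p (by omega) (by omega)⟩,
    fun i j hi hij hj => h4 i j (by omega) hij (by omega)⟩

lemma isSBox_of_window {v : ℕ → Fin n} {c d k : ℕ} (hw : IsSCadetWindow S T v c d)
    (hdk : d ≤ k) (hinj : WindowInj v 1 k) :
    IsSBox S T ((Finset.Icc c d).image v) := by
  have hc1 : 1 ≤ c := hw.1.1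
  have hcd : c ≤ d := hw.1.2.1
  refine ⟨d - c + 1, fun p => v (p + (c - 1)), ?_, ?_, ?_⟩
  · have := scadet_shift (t := c - 1) (by omega) hw
    have e1 : c - (c - 1) = 1 := by omega
    have e2 : d - (c - 1) = d - c + 1 := by omega
    rwa [e1, e2] at this
  · intro p q hp1 hp2 hq1 hq2 hpq
    have := hinj (p + (c - 1)) (q + (c - 1)) (by omega) (by omega) (by omega) (by omega) hpq
    omega
  · have : Finset.Icc c d = (Finset.Icc 1 (d - c + 1)).image (· + (c - 1)) := by
      rw [Finset.image_add_right_Icc]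
      congr 1 <;> omega
    rw [this, Finset.image_image]
    rfl

lemma box_window {k q : ℕ} {v : ℕ → Fin n} {Z : Finset (Fin n)}
    (hmax : IsMaxCadetSeq T k v) (hZ : IsSBox S T Z)
    (hq1 : 1 ≤ q) (hqk : q ≤ k) (hmem : v q ∈ Z) :
    ∃ c d, 1 ≤ c ∧ c ≤ q ∧ q ≤ d ∧ d ≤ k ∧ IsSCadetWindow S T v c d ∧
      Z = (Finset.Icc c d).image v := by
  obtain ⟨l, w, hw, hwinj, rfl⟩ := hZ
  obtain ⟨r, hrmem, hrq⟩ := Finset.mem_image.1 hmem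
  rw [Finset.mem_Icc] at hrmem
  obtain ⟨hr1, hrl⟩ := hrmem
  obtain ⟨hrleq, hqlk, hall⟩ := align hmax hw.1 hr1 hrl hq1 hqk hrq
  refine ⟨1 + (q - r), l + (q - r), by omega, by omega, by omega, by omega, ?_, ?_⟩
  · have h1 : IsSCadetWindow S T (fun p => v (p + (q - r))) 1 l :=
      window_congr (fun p hp1 hpl => (hall p hp1 hpl).trans (by congr 1; omega)) hw
    exact scadet_unshift h1
  · have h2 : (Finset.Icc 1 l).image w = (Finset.Icc 1 l).image (fun p => v (p + (q - r))) := by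
      refine Finset.image_congr fun p hp => ?_
      rw [Finset.coe_Icc, Set.mem_Icc] at hp
      exact (hall p hp.1 hp.2).trans (by congr 1; omega)
    rw [h2]
    have : Finset.Icc (1 + (q - r)) (l + (q - r)) =
        (Finset.Icc 1 l).image (· + (q - r)) := by
      rw [Finset.image_add_right_Icc]
    rw [this, Finset.image_image]
    rfl

lemma extend_max {v : ℕ → Fin n} {k c d : ℕ} (hw : IsSCadetWindow S T v c d) (hdk : d ≤ k) :
    ∃ c' d', c' ≤ c ∧ d ≤ d' ∧ IsMaxSCadetWindow S T k v c' d' := by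
  have H : ∀ N c d, c + (k - d) ≤ N → IsSCadetWindow S T v c d → d ≤ k →
      ∃ c' d', c' ≤ c ∧ d ≤ d' ∧ IsMaxSCadetWindow S T k v c' d' := by
    intro N
    induction N with
    | zero => intro c d h hw' hd; exact absurd hw'.1.1 (by omega)
    | succ N ih =>
      intro c d hN hw' hd
      have hc1 : 1 ≤ c := hw'.1.1
      by_cases h1 : c ≠ 1 ∧ IsSCadetWindow S T v (c - 1) d
      · obtain ⟨c', d', hcc, hdd, hm⟩ := ih (c - 1) d (by omega) h1.2 hd
        exact ⟨c', d', by omega, hdd, hm⟩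
      · by_cases h2 : d ≠ k ∧ IsSCadetWindow S T v c (d + 1)
        · obtain ⟨c', d', hcc, hdd, hm⟩ := ih c (d + 1) (by omega) h2.2 (by omega)
          exact ⟨c', d', hcc, by omega, hm⟩
        · refine ⟨c, d, le_refl _, le_refl _, hd, hw', ?_, ?_⟩
          · by_cases hc : c = 1
            · exact Or.inl hc
            · exact Or.inr fun hh => h1 ⟨hc, hh⟩
          · by_cases hdk' : d = k
            · exact Or.inl hdk'
            · exact Or.inr fun hh => h2 ⟨hdk', hh⟩
  exact H (c + (k - d)) c d le_rfl hw hdk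

lemma interval_image_inj {v : ℕ → Fin n} {k c d a b : ℕ} (hinj : WindowInj v 1 k)
    (hc1 : 1 ≤ c) (hcd : c ≤ d) (hdk : d ≤ k) (ha1 : 1 ≤ a) (hab : a ≤ b) (hbk : b ≤ k)
    (heq : (Finset.Icc c d).image v = (Finset.Icc a b).image v) : c = a ∧ d = b := by
  have hsub : Finset.Icc c d = Finset.Icc a b := by
    ext x
    simp only [Finset.mem_Icc]
    constructor
    · intro hx
      have : v x ∈ (Finset.Icc a b).image v := by
        rw [← heq]; exact Finset.mem_image_of_mem v (Finset.mem_Icc.2 hx)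
      obtain ⟨y, hy, hyx⟩ := Finset.mem_image.1 this
      rw [Finset.mem_Icc] at hy
      have := hinj y x (by omega) (by omega) (by omega) (by omega) hyx
      omega
    · intro hx
      have : v x ∈ (Finset.Icc c d).image v := by
        rw [heq]; exact Finset.mem_image_of_mem v (Finset.mem_Icc.2 hx)
      obtain ⟨y, hy, hyx⟩ := Finset.mem_image.1 this
      rw [Finset.mem_Icc] at hy
      have := hinj y x (by omega) (by omega) (by omega) (by omega) hyx
      omega
  have h1 : a ∈ Finset.Icc c d := by rw [hsub]; exact Finset.mem_Icc.2 ⟨le_refl _, hab⟩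
  have h2 : c ∈ Finset.Icc a b := by rw [← hsub]; exact Finset.mem_Icc.2 ⟨le_refl _, hcd⟩
  have h3 : b ∈ Finset.Icc c d := by rw [hsub]; exact Finset.mem_Icc.2 ⟨hab, le_refl _⟩
  have h4 : d ∈ Finset.Icc a b := by rw [← hsub]; exact Finset.mem_Icc.2 ⟨hcd, le_refl _⟩
  rw [Finset.mem_Icc] at h1 h2 h3 h4
  omega

end StatementFourAux2
section StatementFourAux3

open Finset

variable {n m : ℕ} {S : Fin n → Fin n → Finset ℤ} {T : PlaneTree n m}

noncomputable def blockOf (B : Finset (Finset (Fin n))) (u : Fin n) : Finset (Fin n) :=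
  (B.filter fun Y => u ∈ Y).sup id

lemma blockOf_eq {B : Finset (Finset (Fin n))} {A : Finset (Fin n)} {u : Fin n}
    (hbox : IsSBoxingOf S T Finset.univ B) (hA : A ∈ B) (hu : u ∈ A) : blockOf B u = A := by
  have hu' := hbox.2 u (Finset.mem_univ u)
  have hfilt : B.filter (fun Y => u ∈ Y) = {A} := by
    ext Z
    simp only [Finset.mem_filter, Finset.mem_singleton]
    constructor
    · rintro ⟨hZ, huZ⟩
      exact hu'.unique ⟨hZ, huZ⟩ ⟨hA, hu⟩
    · rintro rfl
      exact ⟨hA, hu⟩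
  rw [blockOf, hfilt, Finset.sup_singleton]
  rfl

lemma blockOf_mem {B : Finset (Finset (Fin n))} (hbox : IsSBoxingOf S T Finset.univ B)
    (u : Fin n) : blockOf B u ∈ B ∧ u ∈ blockOf B u := by
  obtain ⟨A, ⟨hA, hu⟩, _⟩ := hbox.2 u (Finset.mem_univ u)
  rw [blockOf_eq hbox hA hu]
  exact ⟨hA, hu⟩

lemma block_eq_of_mem {B : Finset (Finset (Fin n))} {A A' : Finset (Fin n)} {u : Fin n}
    (hbox : IsSBoxingOf S T Finset.univ B) (hA : A ∈ B) (hu : u ∈ A) (hA' : A' ∈ B)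
    (hu' : u ∈ A') : A = A' :=
  (hbox.2 u (Finset.mem_univ u)).unique ⟨hA, hu⟩ ⟨hA', hu'⟩

lemma boxing_split {B : Finset (Finset (Fin n))} {A A1 A2 : Finset (Fin n)}
    (hbox : IsSBoxingOf S T Finset.univ B) (hA : A ∈ B)
    (hu : A1 ∪ A2 = A) (hdisj : ∀ x, x ∈ A1 → x ∉ A2)
    (h1 : IsSBox S T A1) (h2 : IsSBox S T A2) :
    IsSBoxingOf S T Finset.univ (insert A1 (insert A2 (B.erase A))) := by
  constructor
  · intro Z hZ
    rcases Finset.mem_insert.1 hZ with rfl | hZ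
    · exact ⟨h1, Finset.subset_univ _⟩
    rcases Finset.mem_insert.1 hZ with rfl | hZ
    · exact ⟨h2, Finset.subset_univ _⟩
    · exact hbox.1 Z (Finset.mem_of_mem_erase hZ)
  · intro u _
    by_cases hu1 : u ∈ A1
    · refine ⟨A1, ⟨Finset.mem_insert_self _ _, hu1⟩, ?_⟩
      rintro Z ⟨hZ, huZ⟩
      rcases Finset.mem_insert.1 hZ with rfl | hZ
      · rfl
      rcases Finset.mem_insert.1 hZ with rfl | hZ
      · exact absurd huZ (hdisj u hu1)
      · have := block_eq_of_mem hbox (Finset.mem_of_mem_erase hZ) huZ hA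
          (hu ▸ Finset.mem_union_left _ hu1)
        exact absurd this (Finset.ne_of_mem_erase hZ)
    · by_cases hu2 : u ∈ A2
      · refine ⟨A2, ⟨Finset.mem_insert_of_mem (Finset.mem_insert_self _ _), hu2⟩, ?_⟩
        rintro Z ⟨hZ, huZ⟩
        rcases Finset.mem_insert.1 hZ with rfl | hZ
        · exact absurd hu2 (hdisj u huZ)
        rcases Finset.mem_insert.1 hZ with rfl | hZ
        · rfl
        · have := block_eq_of_mem hbox (Finset.mem_of_mem_erase hZ) huZ hA
            (hu ▸ Finset.mem_union_right _ hu2)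
          exact absurd this (Finset.ne_of_mem_erase hZ)
      · obtain ⟨Z0, ⟨hZ0B, hZ0u⟩, huniq⟩ := hbox.2 u (Finset.mem_univ u)
        have hZ0A : Z0 ≠ A := by
          rintro rfl
          rcases Finset.mem_union.1 (hu ▸ hZ0u : u ∈ A1 ∪ A2) with h | h
          · exact hu1 h
          · exact hu2 h
        refine ⟨Z0, ⟨Finset.mem_insert_of_mem (Finset.mem_insert_of_mem
          (Finset.mem_erase.2 ⟨hZ0A, hZ0B⟩)), hZ0u⟩, ?_⟩
        rintro Z ⟨hZ, huZ⟩
        rcases Finset.mem_insert.1 hZ with rfl | hZ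
        · exact absurd huZ hu1
        rcases Finset.mem_insert.1 hZ with rfl | hZ
        · exact absurd huZ hu2
        · exact huniq Z ⟨Finset.mem_of_mem_erase hZ, huZ⟩

lemma boxing_merge {B : Finset (Finset (Fin n))} {A1 A2 : Finset (Fin n)}
    (hbox : IsSBoxingOf S T Finset.univ B) (h1 : A1 ∈ B) (h2 : A2 ∈ B)
    (hbox12 : IsSBox S T (A1 ∪ A2)) :
    IsSBoxingOf S T Finset.univ (insert (A1 ∪ A2) ((B.erase A1).erase A2)) := by
  constructor
  · intro Z hZ
    rcases Finset.mem_insert.1 hZ with rfl | hZ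
    · exact ⟨hbox12, Finset.subset_univ _⟩
    · exact hbox.1 Z (Finset.mem_of_mem_erase (Finset.mem_of_mem_erase hZ))
  · intro u _
    by_cases hu12 : u ∈ A1 ∪ A2
    · refine ⟨A1 ∪ A2, ⟨Finset.mem_insert_self _ _, hu12⟩, ?_⟩
      rintro Z ⟨hZ, huZ⟩
      rcases Finset.mem_insert.1 hZ with rfl | hZ
      · rfl
      · exfalso
        have hZ2 : Z ≠ A2 := Finset.ne_of_mem_erase hZ
        have hZB := Finset.mem_of_mem_erase (Finset.mem_of_mem_erase hZ)
        have hZ1 : Z ≠ A1 := Finset.ne_of_mem_erase (Finset.mem_of_mem_erase hZ)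
        rcases Finset.mem_union.1 hu12 with h | h
        · exact hZ1 (block_eq_of_mem hbox hZB huZ h1 h)
        · exact hZ2 (block_eq_of_mem hbox hZB huZ h2 h)
    · obtain ⟨Z0, ⟨hZ0B, hZ0u⟩, huniq⟩ := hbox.2 u (Finset.mem_univ u)
      have hZ01 : Z0 ≠ A1 := by rintro rfl; exact hu12 (Finset.mem_union_left _ hZ0u)
      have hZ02 : Z0 ≠ A2 := by rintro rfl; exact hu12 (Finset.mem_union_right _ hZ0u)
      refine ⟨Z0, ⟨Finset.mem_insert_of_mem (Finset.mem_erase.2 ⟨hZ02,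
        Finset.mem_erase.2 ⟨hZ01, hZ0B⟩⟩), hZ0u⟩, ?_⟩
      rintro Z ⟨hZ, huZ⟩
      rcases Finset.mem_insert.1 hZ with rfl | hZ
      · exact absurd huZ hu12
      · exact huniq Z ⟨Finset.mem_of_mem_erase (Finset.mem_of_mem_erase hZ), huZ⟩

lemma sbox_nonempty {Z : Finset (Fin n)} (h : IsSBox S T Z) : Z.Nonempty := by
  obtain ⟨l, w, hw, _, rfl⟩ := h
  have : (1 : ℕ) ∈ Finset.Icc 1 l := Finset.mem_Icc.2 ⟨le_refl _, hw.1.2.1⟩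
  exact ⟨w 1, Finset.mem_image_of_mem w this⟩

lemma boxing_card_le {B : Finset (Finset (Fin n))} (hbox : IsSBoxingOf S T Finset.univ B)
    (x0 : Fin n) : B.card ≤ n := by
  have := Finset.card_le_card_of_injOn
    (f := fun Y : Finset (Fin n) => if h : Y.Nonempty then h.choose else x0)
    (s := B) (t := Finset.univ) (fun _ _ => Finset.mem_univ _) ?_
  · simpa using this
  · intro Y1 hY1 Y2 hY2 hf
    simp only at hf
    have hne1 : Y1.Nonempty := sbox_nonempty (hbox.1 Y1 hY1).1
    have hne2 : Y2.Nonempty := sbox_nonempty (hbox.1 Y2 hY2).1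
    rw [dif_pos hne1, dif_pos hne2] at hf
    exact block_eq_of_mem hbox hY1 (hf ▸ hne1.choose_spec) hY2 hne2.choose_spec

end StatementFourAux3

/-- Corollary 3.15: in a tree with nonzero contribution, any maximal
`S`-cadet sequence of size greater than one intersects some other maximal `S`-cadet
sequence. -/
theorem statement_4 {n : ℕ} (S : Fin n → Fin n → Finset ℤ) (T : PlaneTree n (mOf S))
    (hT : treeContrib S T ≠ 0) (Y : Finset (Fin n)) (hY : IsMaxSCadetSet S T Y)
    (hcard : 1 < Y.card) :
    ∃ Y', IsMaxSCadetSet S T Y' ∧ Y' ≠ Y ∧ (Y ∩ Y').Nonempty := by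
  by_contra hcon
  push_neg at hcon
  obtain ⟨k, v, a, b, hmax, hinj, hw, hYeq⟩ := hY
  obtain ⟨hbk, hwab, hmaxl, hmaxr⟩ := hw
  have ha1 : 1 ≤ a := hwab.1.1
  have hab' : a ≤ b := hwab.1.2.1
  have hcardY : Y.card = b + 1 - a := by
    rw [hYeq, Finset.card_image_of_injOn, Nat.card_Icc]
    intro p hp q hq hpq
    rw [Finset.coe_Icc, Set.mem_Icc] at hp hq
    exact hinj p q (by omega) (by omega) (by omega) (by omega) hpq
  have hab : a < b := by omega
  have hak : a ≤ k := by omega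
  have ha1k : a + 1 ≤ k := by omega
  have hva1 : v a ≠ v (a + 1) := by
    intro h
    have := hinj a (a + 1) (by omega) (by omega) (by omega) (by omega) h
    omega
  have hcontain : ∀ c d q, IsSCadetWindow S T v c d → d ≤ k → c ≤ q → q ≤ d →
      a ≤ q → q ≤ b → a ≤ c ∧ d ≤ b := by
    intro c d q hcd hdk hcq hqd haq hqb
    obtain ⟨c', d', hc'c, hdd', hm⟩ := extend_max hcd hdk
    have hY' : IsMaxSCadetSet S T ((Finset.Icc c' d').image v) :=
      ⟨k, v, c', d', hmax, hinj, hm, rfl⟩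
    have hmm : v q ∈ Y ∩ (Finset.Icc c' d').image v := by
      rw [Finset.mem_inter, hYeq]
      exact ⟨Finset.mem_image_of_mem v (Finset.mem_Icc.2 ⟨haq, hqb⟩),
        Finset.mem_image_of_mem v (Finset.mem_Icc.2 ⟨by omega, by omega⟩)⟩
    by_cases heq : (Finset.Icc c' d').image v = Y
    · rw [hYeq] at heq
      obtain ⟨h1, h2⟩ := interval_image_inj hinj hm.2.1.1.1 hm.2.1.1.2.1 hm.1
        ha1 hab' hbk heq
      omega
    · exact absurd (hcon _ hY' heq) (Finset.nonempty_iff_ne_empty.1 ⟨v q, hmm⟩)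
  classical
  set φ : Finset (Finset (Fin n)) → Finset (Finset (Fin n)) := fun B =>
    if v (a + 1) ∈ blockOf B (v a) then
      insert {v a} (insert (blockOf B (v a) \ {v a}) (B.erase (blockOf B (v a))))
    else insert (blockOf B (v a) ∪ blockOf B (v (a + 1)))
      ((B.erase (blockOf B (v a))).erase (blockOf B (v (a + 1)))) with hφdef
  have key : ∀ B, IsSBoxingOf S T Finset.univ B →
      IsSBoxingOf S T Finset.univ (φ B) ∧
      (B.card + 1 = (φ B).card ∨ (φ B).card + 1 = B.card) ∧ φ (φ B) = B := by
    intro B hbox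
    obtain ⟨hAB, haA⟩ := blockOf_mem hbox (v a)
    obtain ⟨c, d, hc1, hca, had, hdk, hwincd, hAeq⟩ :=
      box_window hmax (hbox.1 _ hAB).1 ha1 hak haA
    obtain ⟨hac, hdb⟩ := hcontain c d a hwincd hdk hca had (le_refl a) (by omega)
    have hceqa : c = a := le_antisymm hca hac
    rw [hceqa] at hAeq
    by_cases hmem : v (a + 1) ∈ blockOf B (v a)
    · -- split case
      have ha1d : a + 1 ≤ d := by
        obtain ⟨p, hp, hpe⟩ := Finset.mem_image.1 (hAeq ▸ hmem)
        rw [Finset.mem_Icc] at hp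
        have := hinj p (a + 1) (by omega) (by omega) (by omega) (by omega) hpe
        omega
      have hA2eq : blockOf B (v a) \ {v a} = (Finset.Icc (a + 1) d).image v := by
        rw [hAeq]
        ext x
        simp only [Finset.mem_sdiff, Finset.mem_image, Finset.mem_Icc,
          Finset.mem_singleton]
        constructor
        · rintro ⟨⟨p, hp, rfl⟩, hxa⟩
          have hpa : p ≠ a := fun h => hxa (by rw [h])
          exact ⟨p, ⟨by omega, hp.2⟩, rfl⟩
        · rintro ⟨p, hp, rfl⟩
          refine ⟨⟨p, ⟨by omega, hp.2⟩, rfl⟩, fun h => ?_⟩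
          have := hinj p a (by omega) (by omega) (by omega) (by omega) h
          omega
      have hsing : ({v a} : Finset (Fin n)) = (Finset.Icc a a).image v := by simp
      have hbox1 : IsSBox S T {v a} := by
        rw [hsing]
        exact isSBox_of_window (subwindow hwab (le_refl a) (le_refl a) (by omega))
          (by omega) hinj
      have hbox2 : IsSBox S T (blockOf B (v a) \ {v a}) := by
        rw [hA2eq]
        exact isSBox_of_window (subwindow hwab (by omega) (by omega) hdb) (by omega) hinj
      have hva1A2 : v (a + 1) ∈ blockOf B (v a) \ {v a} :=
        Finset.mem_sdiff.2 ⟨hmem, Finset.notMem_singleton.2 (Ne.symm hva1)⟩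
      have hunion : ({v a} : Finset (Fin n)) ∪ (blockOf B (v a) \ {v a}) = blockOf B (v a) :=
        Finset.union_sdiff_of_subset (Finset.singleton_subset_iff.2 haA)
      have hdisj : ∀ x, x ∈ ({v a} : Finset (Fin n)) → x ∉ blockOf B (v a) \ {v a} := by
        intro x hx
        rw [Finset.mem_singleton] at hx
        subst hx
        simp [Finset.mem_sdiff]
      have hbox' := boxing_split hbox hAB hunion hdisj hbox1 hbox2
      have hφB : φ B = insert {v a} (insert (blockOf B (v a) \ {v a})
          (B.erase (blockOf B (v a)))) := by
        simp only [hφdef]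
        rw [if_pos hmem]
      have hs1 : ({v a} : Finset (Fin n)) ∉ B := by
        intro h
        have h2 := block_eq_of_mem hbox h (Finset.mem_singleton_self _) hAB haA
        rw [← h2] at hmem
        exact hva1 (Finset.mem_singleton.1 hmem).symm
      have hs2 : blockOf B (v a) \ {v a} ∉ B := by
        intro h
        have h2 := block_eq_of_mem hbox h hva1A2 hAB hmem
        have : v a ∈ blockOf B (v a) \ {v a} := by rw [h2]; exact haA
        simp [Finset.mem_sdiff] at this
      have hne12 : ({v a} : Finset (Fin n)) ≠ blockOf B (v a) \ {v a} := by
        intro h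
        exact hdisj (v a) (Finset.mem_singleton_self _) (h ▸ Finset.mem_singleton_self _)
      have hnm1 : ({v a} : Finset (Fin n)) ∉
          insert (blockOf B (v a) \ {v a}) (B.erase (blockOf B (v a))) := by
        intro h
        rcases Finset.mem_insert.1 h with h | h
        · exact hne12 h
        · exact hs1 (Finset.mem_of_mem_erase h)
      have hnm2 : blockOf B (v a) \ {v a} ∉ B.erase (blockOf B (v a)) :=
        fun h => hs2 (Finset.mem_of_mem_erase h)
      have hboxφ : IsSBoxingOf S T Finset.univ (φ B) := by rw [hφB]; exact hbox'
      have hcard' : (φ B).card = B.card + 1 := by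
        rw [hφB, Finset.card_insert_of_notMem hnm1, Finset.card_insert_of_notMem hnm2,
          Finset.card_erase_of_mem hAB]
        have : 1 ≤ B.card := Finset.card_pos.2 ⟨_, hAB⟩
        omega
      refine ⟨hboxφ, Or.inl hcard'.symm, ?_⟩
      -- involution
      have hb1 : blockOf (φ B) (v a) = {v a} := by
        refine blockOf_eq hboxφ ?_ (Finset.mem_singleton_self _)
        rw [hφB]; exact Finset.mem_insert_self _ _
      have hb2 : blockOf (φ B) (v (a + 1)) = blockOf B (v a) \ {v a} := by
        refine blockOf_eq hboxφ ?_ hva1A2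
        rw [hφB]; exact Finset.mem_insert_of_mem (Finset.mem_insert_self _ _)
      have hnmem : v (a + 1) ∉ blockOf (φ B) (v a) := by
        rw [hb1]
        exact Finset.notMem_singleton.2 (Ne.symm hva1)
      have hstep : φ (φ B) = insert (blockOf (φ B) (v a) ∪ blockOf (φ B) (v (a + 1)))
          (((φ B).erase (blockOf (φ B) (v a))).erase (blockOf (φ B) (v (a + 1)))) := by
        have h0 : φ (φ B) = if v (a + 1) ∈ blockOf (φ B) (v a) then
            insert {v a} (insert (blockOf (φ B) (v a) \ {v a})
              ((φ B).erase (blockOf (φ B) (v a))))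
          else insert (blockOf (φ B) (v a) ∪ blockOf (φ B) (v (a + 1)))
            (((φ B).erase (blockOf (φ B) (v a))).erase (blockOf (φ B) (v (a + 1)))) := by
          rw [hφdef]
        rw [h0, if_neg hnmem]
      rw [hstep, hb1, hb2, hunion, hφB, Finset.erase_insert hnm1, Finset.erase_insert hnm2,
        Finset.insert_erase hAB]
    · -- merge case
      have hda : d = a := by
        by_contra h
        exact hmem (hAeq ▸ Finset.mem_image_of_mem v (Finset.mem_Icc.2 ⟨by omega, by omega⟩))
      have hAsing : blockOf B (v a) = {v a} := by
        rw [hAeq, hda]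
        simp
      obtain ⟨hA'B, ha1A'⟩ := blockOf_mem hbox (v (a + 1))
      obtain ⟨c', d', hc'1, hc'a1, ha1d', hd'k, hwin', hA'eq⟩ :=
        box_window hmax (hbox.1 _ hA'B).1 (by omega) (by omega) ha1A'
      obtain ⟨hac', hd'b⟩ := hcontain c' d' (a + 1) hwin' hd'k hc'a1 ha1d' (by omega) (by omega)
      have hvaA' : v a ∉ blockOf B (v (a + 1)) := by
        intro h
        exact hmem (block_eq_of_mem hbox hA'B h hAB haA ▸ ha1A')
      have hc'ne : c' ≠ a := by
        intro h
        exact hvaA' (hA'eq ▸ Finset.mem_image_of_mem v (Finset.mem_Icc.2 ⟨by omega, by omega⟩))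
      have hc'eq : c' = a + 1 := by omega
      subst hc'eq
      have hAA'ne : blockOf B (v a) ≠ blockOf B (v (a + 1)) := by
        intro h
        exact hmem (h ▸ ha1A')
      have hunion : blockOf B (v a) ∪ blockOf B (v (a + 1)) = (Finset.Icc a d').image v := by
        rw [hAsing, hA'eq]
        have : Finset.Icc a d' = insert a (Finset.Icc (a + 1) d') := by
          ext x
          simp only [Finset.mem_Icc, Finset.mem_insert]
          omega
        rw [this, Finset.image_insert, ← Finset.insert_eq]
      have hboxU : IsSBox S T (blockOf B (v a) ∪ blockOf B (v (a + 1))) := by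
        rw [hunion]
        exact isSBox_of_window (subwindow hwab (le_refl a) (by omega) hd'b) (by omega) hinj
      have hbox' := boxing_merge hbox hAB hA'B hboxU
      have hφB : φ B = insert (blockOf B (v a) ∪ blockOf B (v (a + 1)))
          ((B.erase (blockOf B (v a))).erase (blockOf B (v (a + 1)))) := by
        simp only [hφdef]
        rw [if_neg hmem]
      have hUB : blockOf B (v a) ∪ blockOf B (v (a + 1)) ∉ B := by
        intro h
        have h2 := block_eq_of_mem hbox h (Finset.mem_union_left _ haA) hAB haA
        exact hmem (h2 ▸ Finset.mem_union_right _ ha1A')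
      have hA'erase : blockOf B (v (a + 1)) ∈ B.erase (blockOf B (v a)) :=
        Finset.mem_erase.2 ⟨fun h => hAA'ne h.symm, hA'B⟩
      have hnmU : blockOf B (v a) ∪ blockOf B (v (a + 1)) ∉
          (B.erase (blockOf B (v a))).erase (blockOf B (v (a + 1))) :=
        fun h => hUB (Finset.mem_of_mem_erase (Finset.mem_of_mem_erase h))
      have hboxφ : IsSBoxingOf S T Finset.univ (φ B) := by rw [hφB]; exact hbox'
      have hcard' : (φ B).card + 1 = B.card := by
        rw [hφB, Finset.card_insert_of_notMem hnmU,
          Finset.card_erase_of_mem hA'erase, Finset.card_erase_of_mem hAB]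
        have : 2 ≤ B.card := Finset.one_lt_card.2 ⟨_, hAB, _, hA'B, hAA'ne⟩
        omega
      refine ⟨hboxφ, Or.inr hcard', ?_⟩
      have hUmem : blockOf B (v a) ∪ blockOf B (v (a + 1)) ∈ φ B := by
        rw [hφB]; exact Finset.mem_insert_self _ _
      have hb1 : blockOf (φ B) (v a) = blockOf B (v a) ∪ blockOf B (v (a + 1)) :=
        blockOf_eq hboxφ hUmem (Finset.mem_union_left _ haA)
      have hmem' : v (a + 1) ∈ blockOf (φ B) (v a) := by
        rw [hb1]
        exact Finset.mem_union_right _ ha1A'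
      have hstep : φ (φ B) = insert {v a} (insert (blockOf (φ B) (v a) \ {v a})
          ((φ B).erase (blockOf (φ B) (v a)))) := by
        have h0 : φ (φ B) = if v (a + 1) ∈ blockOf (φ B) (v a) then
            insert {v a} (insert (blockOf (φ B) (v a) \ {v a})
              ((φ B).erase (blockOf (φ B) (v a))))
          else insert (blockOf (φ B) (v a) ∪ blockOf (φ B) (v (a + 1)))
            (((φ B).erase (blockOf (φ B) (v a))).erase (blockOf (φ B) (v (a + 1)))) := by
          rw [hφdef]
        rw [h0, if_pos hmem']
      have hsd : blockOf (φ B) (v a) \ {v a} = blockOf B (v (a + 1)) := by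
        rw [hb1, hAsing]
        ext x
        simp only [Finset.mem_sdiff, Finset.mem_union, Finset.mem_singleton]
        constructor
        · rintro ⟨h | h, hxa⟩
          · exact absurd h hxa
          · exact h
        · intro h
          exact ⟨Or.inr h, fun he => hvaA' (he ▸ h)⟩
      rw [hstep, hsd, hb1, hφB, Finset.erase_insert hnmU, Finset.insert_erase hA'erase]
      rw [← hAsing] at *
      rw [Finset.insert_erase hAB]
  -- the sign-reversing involution kills the sum
  apply hT
  unfold treeContrib contrib
  have hcu : (Finset.univ : Finset (Fin n)).card = n := by simp
  apply Finset.sum_ninvolution (g := fun B => if IsSBoxingOf S T Finset.univ B then φ B else B)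
  · intro B
    by_cases hB : IsSBoxingOf S T Finset.univ B
    · obtain ⟨hbox', hcards, _⟩ := key B hB
      simp only [if_pos hB, if_pos hbox', hcu]
      have hle1 : B.card ≤ n := boxing_card_le hB T.root
      have hle2 : (φ B).card ≤ n := boxing_card_le hbox' T.root
      rcases hcards with h | h
      · have e : n - B.card = (n - (φ B).card) + 1 := by omega
        rw [e, pow_succ]
        ring
      · have e : n - (φ B).card = (n - B.card) + 1 := by omega
        rw [e, pow_succ]
        ring
    · simp only [if_neg hB]
      ring
  · intro B hfne
    by_cases hB : IsSBoxingOf S T Finset.univ B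
    · rw [if_pos hB]
      intro heq
      obtain ⟨_, hcards, _⟩ := key B hB
      rw [heq] at hcards
      omega
    · rw [if_neg hB] at hfne
      exact absurd rfl hfne
  · intro B
    exact Finset.mem_univ _
  · intro B
    by_cases hB : IsSBoxingOf S T Finset.univ B
    · obtain ⟨hbox', _, hinv⟩ := key B hB
      rw [if_pos hB, if_pos hbox', hinv]
    · rw [if_neg hB, if_neg hB]
end
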